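/- arXiv:1104.4752 — 13 statements merged into one kernel-verified Lean document; each statement's English description precedes it below -/
import Mathlib

section
/- Let k be an infinite field. Then every proper T-space of k[x]_0 is contained in Z; that is, if V is a T-space of k[x]_0 with x ∉ V, then every p ∈ V satisfies p.coeff 0 = 0 and p.coeff 1 = 0. -/
/-- A T-space of `k[x]₀`: a `k`-submodule of `k[x]` all of whose elements have zero
constant term, closed under substitution `p ↦ p ∘ g` for every polynomial `g` with
zero constant term. -/
def IsTSpace (k : Type*) [Field k] (V : Submodule k (Polynomial k)) : Prop :=
  (∀ p ∈ V, p.coeff 0 = 0) ∧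
    ∀ p ∈ V, ∀ g : Polynomial k, g.coeff 0 = 0 → p.comp g ∈ V

/-- The T-space of `k[x]₀` generated by a set `S`. -/
noncomputable def TSpaceGen (k : Type*) [Field k] (S : Set (Polynomial k)) : Submodule k (Polynomial k) :=
  sInf {V | IsTSpace k V ∧ S ⊆ (V : Set (Polynomial k))}

/-- A T-ideal of `k[x]₀`: a T-space closed under multiplication by polynomials with
zero constant term. -/
def IsTIdeal (k : Type*) [Field k] (V : Submodule k (Polynomial k)) : Prop :=
  IsTSpace k V ∧ ∀ p ∈ V, ∀ g : Polynomial k, g.coeff 0 = 0 → p * g ∈ V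

/-- The T-ideal of `k[x]₀` generated by a set `S`. -/
noncomputable def TIdealGen (k : Type*) [Field k] (S : Set (Polynomial k)) : Submodule k (Polynomial k) :=
  sInf {V | IsTIdeal k V ∧ S ⊆ (V : Set (Polynomial k))}


open Polynomial in
private lemma coeff_comp_C_mul_X' {k : Type*} [Field k] (p : k[X]) (c : k) (m : ℕ) :
    (p.comp (C c * X)).coeff m = c ^ m * p.coeff m := by
  induction p using Polynomial.induction_on' with
  | add p q hp hq => simp [add_comp, hp, hq, mul_add]
  | monomial n a =>
      rw [monomial_comp, mul_pow, ← C_pow]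
      simp only [coeff_C_mul, coeff_X_pow, coeff_monomial]
      by_cases h : n = m
      · subst h; simp; ring
      · simp [h, Ne.symm h]

open Polynomial in
private lemma X_mem_of_coeff_one_ne {k : Type*} [Field k] [Infinite k]
    (V : Submodule k (Polynomial k)) (hV : IsTSpace k V) :
    ∀ n : ℕ, ∀ p ∈ V, p.natDegree ≤ n → p.coeff 1 ≠ 0 → (X : k[X]) ∈ V := by
  classical
  intro n
  induction n using Nat.strong_induction_on with
  | _ n ih =>
    intro p hp hdeg h1
    by_cases hd : p.natDegree ≤ 1
    · have h0 : p.coeff 0 = 0 := hV.1 p hp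
      set a := p.coeff 1 with ha
      have hrep : p = C a * X + C (p.coeff 0) :=
        eq_X_add_C_of_natDegree_le_one hd
      rw [h0, map_zero, add_zero] at hrep
      have : a⁻¹ • p = X := by
        rw [hrep, smul_eq_C_mul, ← mul_assoc, ← map_mul, inv_mul_cancel₀ h1, map_one, one_mul]
      rw [← this]
      exact V.smul_mem _ hp
    · push_neg at hd
      set N := p.natDegree with hN
      have hN2 : 2 ≤ N := by omega
      have hf : (X ^ N - X : k[X]) ≠ 0 := by
        intro h
        have := congrArg (fun f => Polynomial.coeff f 1) h
        simp only [coeff_X_pow, coeff_sub, coeff_X_one, coeff_zero] at this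
        rw [if_neg (by omega : ¬(1 = N))] at this
        simp at this
      obtain ⟨c, hc⟩ := Infinite.exists_notMem_finset (X ^ N - X : k[X]).roots.toFinset
      have hcN : c ^ N ≠ c := by
        intro h
        apply hc
        simp only [Multiset.mem_toFinset, mem_roots hf, IsRoot.def, eval_sub, eval_pow, eval_X]
        rw [h, sub_self]
      set q : k[X] := p.comp (C c * X) - (c ^ N) • p with hq
      have hqV : q ∈ V := by
        refine V.sub_mem (hV.2 p hp _ ?_) (V.smul_mem _ hp)
        simp
      have hqc : ∀ m, q.coeff m = c ^ m * p.coeff m - c ^ N * p.coeff m := by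
        intro m
        simp [hq, coeff_comp_C_mul_X', coeff_smul, smul_eq_mul]
        ring
      have hq1 : q.coeff 1 ≠ 0 := by
        rw [hqc 1, pow_one, ← sub_mul]
        exact mul_ne_zero (sub_ne_zero.2 fun h => hcN (by rw [← h])) h1
      have hq0 : q ≠ 0 := fun h => hq1 (by simp [h])
      have hdegq : q.natDegree < N := by
        rw [natDegree_lt_iff_degree_lt hq0, degree_lt_iff_coeff_zero]
        intro m hm
        have hm' : (N : ℕ) ≤ m := by exact_mod_cast hm
        rw [hqc m]
        rcases eq_or_lt_of_le hm' with h | h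
        · rw [← h]; ring
        · rw [coeff_eq_zero_of_natDegree_lt h]; ring
      exact ih q.natDegree (lt_of_lt_of_le hdegq hdeg) q hqV le_rfl hq1

/-- If `k` is infinite, every proper T-space of `k[x]₀` is contained in `Z`. -/
theorem proper_TSpace_le_Z (k : Type*) [Field k] [Infinite k]
    (V : Submodule k (Polynomial k)) (hV : IsTSpace k V) (hx : Polynomial.X ∉ V) :
    ∀ p ∈ V, p.coeff 0 = 0 ∧ p.coeff 1 = 0 := by
  intro p hp
  refine ⟨hV.1 p hp, ?_⟩
  by_contra h1
  exact hx (X_mem_of_coeff_one_ne V hV p.natDegree p hp le_rfl h1)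
end

section
/- Let k be a finite field. Then Z, the set of all polynomials p over k with p.coeff 0 = 0 and p.coeff 1 = 0, is a maximal T-space of k[x]_0: Z is a proper T-space, and every T-space of k[x]_0 that properly contains Z contains x. -/
/-- `Z`: the set of polynomials with zero constant and zero linear coefficient,
as a `k`-submodule of `k[x]`. -/
def Zspace (k : Type*) [Field k] : Submodule k (Polynomial k) where
  carrier := {p : Polynomial k | p.coeff 0 = 0 ∧ p.coeff 1 = 0}
  add_mem' := fun ha hb => by
    simp only [Set.mem_setOf_eq, Polynomial.coeff_add] at *
    exact ⟨by rw [ha.1, hb.1, add_zero], by rw [ha.2, hb.2, add_zero]⟩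
  zero_mem' := by simp
  smul_mem' := fun c p hp => by
    simp only [Set.mem_setOf_eq, Polynomial.coeff_smul] at *
    exact ⟨by rw [hp.1, smul_zero], by rw [hp.2, smul_zero]⟩

/-- If `k` is a finite field, then `Z` is a maximal T-space of `k[x]₀`. -/
theorem Zspace_isMaximal (k : Type*) [Field k] [Fintype k] :
    IsTSpace k (Zspace k) ∧ Polynomial.X ∉ Zspace k ∧
      ∀ U : Submodule k (Polynomial k), IsTSpace k U → Zspace k < U → Polynomial.X ∈ U := by
  have hmem : ∀ p : Polynomial k, p ∈ Zspace k ↔ p.coeff 0 = 0 ∧ p.coeff 1 = 0 :=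
    fun p => Iff.rfl
  refine ⟨⟨fun p hp => ((hmem p).1 hp).1, ?_⟩, ?_, ?_⟩
  · intro p hp g hg
    obtain ⟨h0, h1⟩ := (hmem p).1 hp
    rw [hmem]
    have hg0 : g.eval 0 = 0 := by rw [← Polynomial.coeff_zero_eq_eval_zero]; exact hg
    constructor
    · rw [Polynomial.coeff_zero_eq_eval_zero, Polynomial.eval_comp, hg0,
        ← Polynomial.coeff_zero_eq_eval_zero, h0]
    · have hd : (Polynomial.derivative p).coeff 0 = 0 := by
        rw [Polynomial.coeff_derivative]; simp [h1]
      have key : (Polynomial.derivative (p.comp g)).coeff 0 = 0 := by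
        rw [Polynomial.derivative_comp, Polynomial.mul_coeff_zero]
        have hc : ((Polynomial.derivative p).comp g).coeff 0 = 0 := by
          rw [Polynomial.coeff_zero_eq_eval_zero, Polynomial.eval_comp, hg0,
            ← Polynomial.coeff_zero_eq_eval_zero, hd]
        rw [hc, mul_zero]
      have := Polynomial.coeff_derivative (p.comp g) 0
      rw [key] at this
      simpa using this.symm
  · intro h
    have := ((hmem _).1 h).2
    simp at this
  · intro U hU hlt
    obtain ⟨p, hpU, hpZ⟩ := SetLike.exists_of_lt hlt
    have h0 : p.coeff 0 = 0 := hU.1 p hpU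
    have h1 : p.coeff 1 ≠ 0 := fun h => hpZ ((hmem p).2 ⟨h0, h⟩)
    have hz : p - Polynomial.C (p.coeff 1) * Polynomial.X ∈ Zspace k := by
      rw [hmem]
      constructor <;> simp [h0]
    have hzU : p - Polynomial.C (p.coeff 1) * Polynomial.X ∈ U := hlt.le hz
    have hcx : Polynomial.C (p.coeff 1) * Polynomial.X ∈ U := by
      have := U.sub_mem hpU hzU
      simpa using this
    have : (p.coeff 1)⁻¹ • (Polynomial.C (p.coeff 1) * Polynomial.X) ∈ U :=
      U.smul_mem _ hcx
    rwa [Polynomial.smul_eq_C_mul, ← mul_assoc, ← Polynomial.C_mul,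
      inv_mul_cancel₀ h1, Polynomial.C_1, one_mul] at this
end

section
/- Let k be a finite field with q elements. Then W_0, the T-ideal of k[x]_0 generated by x − x^q, is a maximal T-space of k[x]_0: W_0 is a proper T-space, and every T-space of k[x]_0 that properly contains W_0 contains x. -/
open Polynomial

/-- The submodule of polynomials vanishing everywhere. -/
def Van (k : Type*) [Field k] : Submodule k (Polynomial k) where
  carrier := {p | ∀ a : k, p.eval a = 0}
  add_mem' := by intro p q hp hq a; simp [hp a, hq a]
  zero_mem' := by intro a; simp
  smul_mem' := by intro c p hp a; simp [hp a]

lemma mem_Van {k : Type*} [Field k] {p : Polynomial k} :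
    p ∈ Van k ↔ ∀ a : k, p.eval a = 0 := Iff.rfl

lemma isTIdeal_Van (k : Type*) [Field k] : IsTIdeal k (Van k) := by
  refine ⟨⟨?_, ?_⟩, ?_⟩
  · intro p hp
    rw [coeff_zero_eq_eval_zero]; exact hp 0
  · intro p hp g _ a
    rw [eval_comp]; exact hp _
  · intro p hp g _ a
    rw [eval_mul, hp a, zero_mul]

/-- If `k` is a finite field with `q` elements, then `W₀`, the T-ideal of `k[x]₀`
generated by `x - x^q`, is a maximal T-space of `k[x]₀`. -/
theorem W0_isMaximal (k : Type*) [Field k] [Fintype k] (q : ℕ) (hq : Fintype.card k = q) :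
    IsTSpace k (TIdealGen k {Polynomial.X - Polynomial.X ^ q}) ∧
      Polynomial.X ∉ TIdealGen k {Polynomial.X - Polynomial.X ^ q} ∧
      ∀ U : Submodule k (Polynomial k), IsTSpace k U →
        TIdealGen k {Polynomial.X - Polynomial.X ^ q} < U → Polynomial.X ∈ U := by
  classical
  set W : Submodule k (Polynomial k) := TIdealGen k {X - X ^ q} with hW
  have hq2 : 1 < q := hq ▸ Fintype.one_lt_card
  have hq1 : q - 1 ≠ 0 := Nat.sub_ne_zero_of_lt hq2
  have hgen : X - X ^ q ∈ Van k := by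
    intro a
    have : a ^ q = a := by rw [← hq]; exact FiniteField.pow_card a
    simp [this]
  -- W ≤ Van
  have hWV : W ≤ Van k := sInf_le ⟨isTIdeal_Van k, by simpa using hgen⟩
  -- basic closure properties of W
  have hXW : X - X ^ q ∈ W := Submodule.mem_sInf.2 fun V hV => hV.2 rfl
  have hmul : ∀ p ∈ W, ∀ g : Polynomial k, g.coeff 0 = 0 → p * g ∈ W := by
    intro p hp g hg
    exact Submodule.mem_sInf.2 fun V hV =>
      hV.1.2 p (Submodule.mem_sInf.1 hp V hV) g hg
  have hcomp : ∀ p ∈ W, ∀ g : Polynomial k, g.coeff 0 = 0 → p.comp g ∈ W := by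
    intro p hp g hg
    exact Submodule.mem_sInf.2 fun V hV =>
      hV.1.1.2 p (Submodule.mem_sInf.1 hp V hV) g hg
  -- Van ≤ W
  have hmonic : Monic (X ^ q - X : Polynomial k) := by
    apply monic_X_pow_sub
    simpa using (Nat.one_lt_cast.2 hq2 : (1 : WithBot ℕ) < q)
  have hdeg : (X ^ q - X : Polynomial k).degree = q := by
    rw [degree_sub_eq_left_of_degree_lt, degree_X_pow]
    rw [degree_X_pow, degree_X]
    exact_mod_cast hq2
  have hVW : Van k ≤ W := by
    intro p hp
    have h0 : p %ₘ (X ^ q - X) = 0 := by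
      by_cases hz : p %ₘ (X ^ q - X) = 0
      · exact hz
      apply Polynomial.eq_zero_of_natDegree_lt_card_of_eval_eq_zero
        (p %ₘ (X ^ q - X)) (Function.injective_id (α := k))
      · intro a
        have hsum := congrArg (eval a) (Polynomial.modByMonic_add_div p (X ^ q - X))
        rw [eval_add, hp a, eval_mul, eval_sub, eval_pow, eval_X] at hsum
        have haq : a ^ q = a := by rw [← hq]; exact FiniteField.pow_card a
        rw [haq, sub_self, zero_mul, add_zero] at hsum
        simpa using hsum
      · rw [hq]
        have hlt := Polynomial.degree_modByMonic_lt p hmonic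
        rw [hdeg] at hlt
        exact (Polynomial.natDegree_lt_iff_degree_lt hz).2 hlt
    have hpe : p = (X ^ q - X) * (p /ₘ (X ^ q - X)) := by
      conv_lhs => rw [← Polynomial.modByMonic_add_div p (X ^ q - X)]
      rw [h0, zero_add]
    set h := p /ₘ (X ^ q - X) with hh
    have hXqW : (X ^ q - X : Polynomial k) ∈ W := by
      have := W.neg_mem hXW
      simpa using this
    have : p = (h.coeff 0) • (X ^ q - X) + (X ^ q - X) * (h - C (h.coeff 0)) := by
      rw [hpe]; ring_nf
      rw [smul_eq_C_mul]; ring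
    rw [this]
    exact W.add_mem (W.smul_mem _ hXqW)
      (hmul _ hXqW _ (by simp))
  -- part 1 : W is a T-space
  have hT : IsTSpace k W := by
    constructor
    · intro p hp
      rw [coeff_zero_eq_eval_zero]
      exact hWV hp 0
    · exact hcomp
  refine ⟨hT, ?_, ?_⟩
  · intro hX
    have := hWV hX 1
    simp at this
  · intro U hU hWU
    obtain ⟨p, hpU, hpW⟩ := SetLike.exists_of_lt hWU
    have hWU' : W ≤ U := le_of_lt hWU
    have hpV : p ∉ Van k := fun h => hpW (hVW h)
    obtain ⟨a, ha⟩ : ∃ a : k, p.eval a ≠ 0 := by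
      by_contra h; push_neg at h; exact hpV h
    set c := p.eval a with hc
    -- step 1 : X^(q-1) ∈ U
    have hpow : ∀ t : k, t ≠ 0 → t ^ (q - 1) = 1 := by
      intro t ht
      rw [← hq]; exact FiniteField.pow_card_sub_one_eq_one t ht
    have hzpow : (0 : k) ^ (q - 1) = 0 := zero_pow hq1
    have hg1 : (C a * X ^ (q - 1) : Polynomial k).coeff 0 = 0 := by
      rw [coeff_zero_eq_eval_zero]; simp [hzpow]
    have hcomp1 : p.comp (C a * X ^ (q - 1)) ∈ U := hU.2 p hpU _ hg1
    have hdiff : p.comp (C a * X ^ (q - 1)) - c • X ^ (q - 1) ∈ Van k := by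
      intro t
      simp only [eval_sub, eval_comp, eval_smul, eval_mul, eval_C, eval_pow, eval_X, smul_eq_mul]
      by_cases ht : t = 0
      · subst ht
        rw [hzpow, mul_zero, mul_zero, sub_zero]
        have := hU.1 p hpU
        rwa [coeff_zero_eq_eval_zero] at this
      · rw [hpow t ht, mul_one, mul_one, sub_self]
    have hXq1 : (X ^ (q - 1) : Polynomial k) ∈ U := by
      have h1 : c • (X ^ (q - 1) : Polynomial k) ∈ U := by
        have := U.sub_mem hcomp1 (hWU' (hVW hdiff))
        simpa using this
      have := U.smul_mem c⁻¹ h1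
      rwa [smul_smul, inv_mul_cancel₀ ha, one_smul] at this
    -- step 2 : indicator polynomials
    set f : k → Polynomial k := fun b => (X ^ (q - 1)).comp (1 - (X - C b) ^ (q - 1)) with hf
    have hfval : ∀ b t : k, (f b).eval t = (1 - (t - b) ^ (q - 1)) ^ (q - 1) := by
      intro b t
      simp [hf, eval_comp]
    have hfU : ∀ b : k, b ≠ 0 → f b ∈ U := by
      intro b hb
      apply hU.2 _ hXq1
      rw [coeff_zero_eq_eval_zero]
      have : (0 : k) - b = -b := by ring
      simp only [eval_sub, eval_one, eval_pow, eval_X, eval_C, this]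
      rw [show (-b) ^ (q-1) = 1 from hpow _ (neg_ne_zero.2 hb)]
      ring
    set xc : Polynomial k := ∑ b : k, b • f b with hxc
    have hxcU : xc ∈ U := by
      apply Submodule.sum_mem
      intro b _
      by_cases hb : b = 0
      · subst hb; simp
      · exact U.smul_mem _ (hfU b hb)
    have hrem : X - xc ∈ Van k := by
      intro t
      rw [eval_sub, eval_X, hxc, eval_finset_sum]
      have : ∀ b : k, (b • f b).eval t = if b = t then t else 0 := by
        intro b
        rw [eval_smul, smul_eq_mul, hfval]
        by_cases hb : b = t
        · subst hb
          rw [sub_self, zero_pow hq1, sub_zero, one_pow, mul_one]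
          simp
        · rw [hpow (t - b) (sub_ne_zero.2 (Ne.symm hb)), sub_self, zero_pow hq1, mul_zero]
          simp [hb]
      rw [Finset.sum_congr rfl (fun b _ => this b),
        Finset.sum_ite_eq' Finset.univ t (fun _ => t)]
      simp
    have : (X : Polynomial k) = xc + (X - xc) := by ring
    rw [this]
    exact U.add_mem hxcU (hWU' (hVW hrem))
end

section
/- Let k be a finite field with q elements and characteristic p > 2, and for each n ≥ 0 let V_n denote the T-space of k[x]_0 generated by x + x^(q^(2^n)). Then for every n ≥ 0 and every m ≥ 1, the polynomial x − x^(q^(2^(n+m))) belongs to V_n. -/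
/-- For a finite field `k` with `q` elements and characteristic `p > 2`, and
`Vₙ` the T-space of `k[x]₀` generated by `x + x^(q^(2^n))`, one has
`x - x^(q^(2^(n+m))) ∈ Vₙ` for all `n ≥ 0` and `m ≥ 1`. -/
theorem nice_for_Vn (k : Type*) [Field k] [Fintype k] (q p : ℕ)
    (hq : Fintype.card k = q) (hp : ringChar k = p) (hp2 : 2 < p)
    (n m : ℕ) (hm : 1 ≤ m) :
    Polynomial.X - Polynomial.X ^ (q ^ (2 ^ (n + m))) ∈
      TSpaceGen k {Polynomial.X + Polynomial.X ^ (q ^ (2 ^ n))} := by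
  set V := TSpaceGen k {Polynomial.X + Polynomial.X ^ (q ^ (2 ^ n))} with hV
  have hq2 : 2 ≤ q := by
    have := Fintype.one_lt_card (α := k)
    omega
  have hcomp : ∀ r ∈ V, ∀ g : Polynomial k, g.coeff 0 = 0 → r.comp g ∈ V := by
    intro r hr g hg
    rw [hV, TSpaceGen, Submodule.mem_sInf] at *
    intro W hW
    exact hW.1.2 r (hr W hW) g hg
  have hgen : Polynomial.X + Polynomial.X ^ (q ^ (2 ^ n)) ∈ V := by
    rw [hV, TSpaceGen, Submodule.mem_sInf]
    intro W hW
    exact hW.2 rfl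
  have hX0 : ∀ N : ℕ, 1 ≤ N → (Polynomial.X ^ N : Polynomial k).coeff 0 = 0 := by
    intro N hN
    rw [Polynomial.coeff_X_pow]
    simp only [if_neg (by omega : ¬ (0 : ℕ) = N)]
  have hpow : ∀ j : ℕ, 1 ≤ q ^ (2 ^ j) := fun j => Nat.one_le_pow _ _ (by omega)
  clear hq hp hp2
  induction m with
  | zero => omega
  | succ m ih =>
    rcases Nat.eq_or_lt_of_le hm with h1 | h1
    · -- m + 1 = 1, base case
      have hm0 : m = 0 := by omega
      subst hm0
      have h2 := hcomp (Polynomial.X + Polynomial.X ^ (q ^ (2 ^ n))) hgen (Polynomial.X ^ (q ^ (2 ^ n))) (hX0 _ (hpow n))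
      have heq : ((Polynomial.X : Polynomial k) + Polynomial.X ^ (q ^ (2 ^ n))).comp
          (Polynomial.X ^ (q ^ (2 ^ n)))
          = Polynomial.X ^ (q ^ (2 ^ n)) + Polynomial.X ^ (q ^ (2 ^ (n + 1))) := by
        rw [Polynomial.add_comp, Polynomial.X_comp, Polynomial.pow_comp,
          Polynomial.X_comp, ← pow_mul, ← pow_add, ← Nat.mul_two, ← pow_succ]
      rw [heq] at h2
      have h3 := V.sub_mem hgen h2
      have heq2 : ((Polynomial.X : Polynomial k) + Polynomial.X ^ (q ^ (2 ^ n))) -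
          (Polynomial.X ^ (q ^ (2 ^ n)) + Polynomial.X ^ (q ^ (2 ^ (n + 1))))
          = Polynomial.X - Polynomial.X ^ (q ^ (2 ^ (n + 1))) := by ring
      rwa [heq2] at h3
    · -- m ≥ 1, inductive step
      have hm1 : 1 ≤ m := by omega
      have ihm := ih hm1
      have h2 := hcomp (Polynomial.X - Polynomial.X ^ (q ^ (2 ^ (n + m)))) ihm (Polynomial.X ^ (q ^ (2 ^ (n + m)))) (hX0 _ (hpow _))
      have heq : ((Polynomial.X : Polynomial k) - Polynomial.X ^ (q ^ (2 ^ (n + m)))).comp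
          (Polynomial.X ^ (q ^ (2 ^ (n + m))))
          = Polynomial.X ^ (q ^ (2 ^ (n + m))) - Polynomial.X ^ (q ^ (2 ^ (n + m + 1))) := by
        rw [Polynomial.sub_comp, Polynomial.X_comp, Polynomial.pow_comp,
          Polynomial.X_comp, ← pow_mul, ← pow_add, ← Nat.mul_two, ← pow_succ]
      rw [heq] at h2
      have h3 := V.add_mem ihm h2
      have heq2 : ((Polynomial.X : Polynomial k) - Polynomial.X ^ (q ^ (2 ^ (n + m)))) +
          (Polynomial.X ^ (q ^ (2 ^ (n + m))) - Polynomial.X ^ (q ^ (2 ^ (n + m + 1))))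
          = Polynomial.X - Polynomial.X ^ (q ^ (2 ^ (n + m + 1))) := by ring
      rw [heq2] at h3
      have : n + m + 1 = n + (m + 1) := by omega
      rwa [this] at h3
end

section
/- Let k be a finite field with q elements and characteristic p > 2, and for each n ≥ 0 let V_n denote the T-space of k[x]_0 generated by x + x^(q^(2^n)). Then for all n, m ≥ 0 with n ≠ m, V_n + V_m = k[x]_0; that is, x ∈ V_n + V_m. -/
open Polynomial

lemma mem_TSpaceGen_of_mem {k : Type*} [Field k] {S : Set (Polynomial k)} {f : Polynomial k}
    (hf : f ∈ S) : f ∈ TSpaceGen k S :=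
  Submodule.mem_sInf.2 fun _ hV => hV.2 hf

lemma tspace_pow_sub {k : Type*} [Field k] (V : Submodule k (Polynomial k))
    (hV : IsTSpace k V) (A : ℕ) (hA1 : 1 ≤ A) (hA : X ^ A - X ∈ V) :
    ∀ t : ℕ, X ^ (A ^ (t + 1)) - X ∈ V := by
  intro t
  induction t with
  | zero => simpa using hA
  | succ t ih =>
    have hg : ((X : Polynomial k) ^ A).coeff 0 = 0 := by
      rw [coeff_X_pow]
      exact if_neg (by omega)
    have h1 := hV.2 _ ih (X ^ A) hg
    have h2 : ((X ^ (A ^ (t+1)) - X : Polynomial k).comp (X ^ A))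
        = X ^ (A ^ (t + 2)) - X ^ A := by
      rw [sub_comp, X_comp, X_pow_comp, ← pow_mul]
      congr 2
      ring
    rw [h2] at h1
    have h3 := V.add_mem h1 hA
    rwa [sub_add_sub_cancel] at h3

lemma tspace_key {k : Type*} [Field k] (p : ℕ) [Fact p.Prime] [CharP k p]
    (V : Submodule k (Polynomial k)) (hV : IsTSpace k V) (s : ℕ) (hs : 1 ≤ s)
    (hf : X + X ^ (p ^ s) ∈ V) :
    X ^ ((p ^ s) ^ 2) - X ∈ V := by
  set Q := p ^ s with hQdef
  have hQ1 : 1 < Q := Nat.one_lt_pow (by omega) (Fact.out : p.Prime).one_lt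
  have hc0 : ((X : Polynomial k) + X ^ Q).coeff 0 = 0 := by
    rw [coeff_add, coeff_X_zero, coeff_X_pow, if_neg (by omega), add_zero]
  have hcomp := hV.2 _ hf _ hc0
  have hfrob : ((X : Polynomial k) + X ^ Q) ^ Q = X ^ Q + X ^ (Q ^ 2) := by
    rw [hQdef, add_pow_char_pow, ← pow_mul, pow_two]
  have hcompeq : ((X : Polynomial k) + X ^ Q).comp (X + X ^ Q)
      = X + X ^ Q + (X ^ Q + X ^ (Q ^ 2)) := by
    rw [add_comp, X_comp, X_pow_comp, hfrob]
  rw [hcompeq] at hcomp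
  have h2 := V.sub_mem hcomp (V.smul_mem (2 : k) hf)
  have heq : (X : Polynomial k) + X ^ Q + (X ^ Q + X ^ (Q ^ 2)) - (2 : k) • (X + X ^ Q)
      = X ^ (Q ^ 2) - X := by
    rw [two_smul]
    ring
  rwa [heq] at h2

lemma aux {k : Type*} [Field k] [Fintype k] (q p : ℕ)
    (hq : Fintype.card k = q) (hp : ringChar k = p) (hp2 : 2 < p)
    (n m : ℕ) (hnm : n < m) :
    Polynomial.X ∈
      TSpaceGen k {Polynomial.X + Polynomial.X ^ (q ^ (2 ^ n))} ⊔
        TSpaceGen k {Polynomial.X + Polynomial.X ^ (q ^ (2 ^ m))} := by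
  haveI : CharP k p := hp ▸ ringChar.charP k
  haveI hprime : Fact p.Prime := ⟨CharP.char_is_prime k p⟩
  obtain ⟨d, hpp, hd⟩ := FiniteField.card k p
  rw [hq] at hd
  set Q := q ^ (2 ^ n) with hQdef
  set R := q ^ (2 ^ m) with hRdef
  set s := (d : ℕ) * 2 ^ n with hsdef
  have hQps : Q = p ^ s := by rw [hQdef, hd, ← pow_mul]
  have hs1 : 1 ≤ s := Nat.mul_pos d.2 (pow_pos (by norm_num) n)
  -- R = (Q^2)^(2^(m-n-1))
  have h2m : 2 ^ m = 2 ^ n * (2 * 2 ^ (m - n - 1)) := by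
    rw [← pow_succ', ← pow_add]
    congr 1
    omega
  have hR : R = (Q ^ 2) ^ (2 ^ (m - n - 1)) := by
    rw [hRdef, hQdef, ← pow_mul, ← pow_mul, h2m]
  -- X^R - X is in every T-space containing X + X^Q
  have key : ∀ V : Submodule k (Polynomial k), IsTSpace k V → (X + X ^ Q) ∈ V →
      X ^ R - X ∈ V := by
    intro V hV hf
    have h1 : X ^ ((p ^ s) ^ 2) - X ∈ V := tspace_key p V hV s hs1 (hQps ▸ hf)
    have hA1 : 1 ≤ (p ^ s) ^ 2 := Nat.one_le_pow _ _ (pow_pos hprime.out.pos s)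
    have h2 := tspace_pow_sub V hV _ hA1 h1 (2 ^ (m - n - 1) - 1)
    have he : 2 ^ (m - n - 1) - 1 + 1 = 2 ^ (m - n - 1) := by
      have : 0 < 2 ^ (m - n - 1) := pow_pos (by norm_num) _
      omega
    rw [he] at h2
    rwa [hR, hQps]
  have hVn : (X : Polynomial k) ^ R - X ∈ TSpaceGen k {X + X ^ Q} :=
    Submodule.mem_sInf.2 fun V hV => key V hV.1 (hV.2 rfl)
  have hVm : (X : Polynomial k) + X ^ R ∈ TSpaceGen k {X + X ^ R} :=
    mem_TSpaceGen_of_mem rfl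
  set T := TSpaceGen k {(X : Polynomial k) + X ^ Q} ⊔ TSpaceGen k {(X : Polynomial k) + X ^ R}
    with hT
  have h1 : (X : Polynomial k) ^ R - X ∈ T := Submodule.mem_sup_left hVn
  have h2 : (X : Polynomial k) + X ^ R ∈ T := Submodule.mem_sup_right hVm
  have h3 := T.smul_mem ((2 : k)⁻¹) (T.sub_mem h2 h1)
  have h2k : (2 : k) ≠ 0 := by
    intro h
    have := (CharP.cast_eq_zero_iff k p 2).1 (by exact_mod_cast h)
    have := Nat.le_of_dvd (by norm_num) this
    omega
  have heq : ((2 : k)⁻¹) • ((X : Polynomial k) + X ^ R - (X ^ R - X)) = X := by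
    have : (X : Polynomial k) + X ^ R - (X ^ R - X) = (2 : k) • X := by
      rw [two_smul]; ring
    rw [this, smul_smul, inv_mul_cancel₀ h2k, one_smul]
  rwa [heq] at h3

/-- For a finite field `k` with `q` elements and characteristic `p > 2`, and
`Vₙ` the T-space of `k[x]₀` generated by `x + x^(q^(2^n))`, one has
`Vₙ + Vₘ = k[x]₀` whenever `n ≠ m`, i.e. `x ∈ Vₙ + Vₘ`. -/
theorem Vn_sup_Vm (k : Type*) [Field k] [Fintype k] (q p : ℕ)
    (hq : Fintype.card k = q) (hp : ringChar k = p) (hp2 : 2 < p)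
    (n m : ℕ) (hnm : n ≠ m) :
    Polynomial.X ∈
      TSpaceGen k {Polynomial.X + Polynomial.X ^ (q ^ (2 ^ n))} ⊔
        TSpaceGen k {Polynomial.X + Polynomial.X ^ (q ^ (2 ^ m))} := by
  rcases hnm.lt_or_gt with h | h
  · exact aux q p hq hp hp2 n m h
  · rw [sup_comm]
    exact aux q p hq hp hp2 m n h
end

section
/- Let k be a finite field of characteristic p > 2. Then k[x]_0 has infinitely many maximal T-spaces; that is, the set of maximal T-spaces of k[x]_0 is infinite. -/
set_option linter.unusedSectionVars false

namespace TSpaceAux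

open Polynomial Finset

variable (k : Type*) [Field k] [Fintype k]

/-- `X^(q^n) - X`, the polynomial whose roots are `F_{q^n}`. -/
noncomputable def A (n : ℕ) : Polynomial k := X ^ (Fintype.card k ^ n) - X

variable {k}

theorem comp_card (g : Polynomial k) : g.comp (X ^ Fintype.card k) = g ^ Fintype.card k := by
  rw [← Polynomial.expand_eq_comp_X_pow, FiniteField.expand_card]

theorem comp_card_pow (n : ℕ) (g : Polynomial k) :
    g.comp (X ^ (Fintype.card k ^ n)) = g ^ (Fintype.card k ^ n) := by
  induction n with
  | zero => simp
  | succ n ih =>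
    rw [← Polynomial.expand_eq_comp_X_pow] at ih ⊢
    rw [pow_succ, ← Polynomial.expand_expand, FiniteField.expand_card, map_pow, ih,
      ← pow_mul]

theorem sub_dvd_comp_sub (P u v : Polynomial k) : u - v ∣ P.comp u - P.comp v := by
  have h := Polynomial.sub_dvd_eval_sub u v (P.map (Polynomial.C : k →+* Polynomial k))
  rwa [Polynomial.comp, Polynomial.comp, Polynomial.eval₂_eq_eval_map,
    Polynomial.eval₂_eq_eval_map]

theorem A_dvd_pow_card_sub (n : ℕ) (g : Polynomial k) :
    A k n ∣ g ^ (Fintype.card k ^ n) - g := by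
  have h := sub_dvd_comp_sub g (X ^ (Fintype.card k ^ n)) X
  rwa [comp_card_pow, Polynomial.comp_X] at h

theorem A_dvd_comp_A (n : ℕ) (g : Polynomial k) : A k n ∣ (A k n).comp g := by
  rw [A, Polynomial.sub_comp, Polynomial.X_pow_comp, Polynomial.X_comp]
  exact A_dvd_pow_card_sub n g

theorem A_dvd_mod (n : ℕ) (hn : 0 < n) (a : ℕ) :
    A k n ∣ X ^ (Fintype.card k ^ a) - X ^ (Fintype.card k ^ (a % n)) := by
  induction a using Nat.strong_induction_on with
  | _ a ih =>
    rcases lt_or_ge a n with h | h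
    · rw [Nat.mod_eq_of_lt h, sub_self]
      exact dvd_zero _
    · have h1 : a - n < a := Nat.sub_lt (lt_of_lt_of_le hn h) hn
      have h2 : A k n ∣ X ^ (Fintype.card k ^ a) - X ^ (Fintype.card k ^ (a - n)) := by
        have := A_dvd_pow_card_sub n ((X : Polynomial k) ^ (Fintype.card k ^ (a - n)))
        rwa [← pow_mul, ← pow_add, Nat.sub_add_cancel h] at this
      have h3 := ih (a - n) h1
      have h4 : (a - n) % n = a % n := by
        conv_rhs => rw [Nat.mod_eq_sub_mod h]
      rw [h4] at h3
      have := dvd_add h2 h3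
      rwa [sub_add_sub_cancel] at this

variable (k)

/-- The T-space of polynomials mapping `F_{q^n}` into `F_q`, expressed via divisibility. -/
noncomputable def V (n : ℕ) : Submodule k (Polynomial k) where
  carrier := {P | P.coeff 0 = 0 ∧ A k n ∣ P.comp (X ^ Fintype.card k) - P}
  zero_mem' := by
    refine ⟨Polynomial.coeff_zero 0, ?_⟩
    simp
  add_mem' := by
    rintro a b ⟨ha0, ha⟩ ⟨hb0, hb⟩
    refine ⟨by simp [Polynomial.coeff_add, ha0, hb0], ?_⟩
    have h : (a + b).comp (X ^ Fintype.card k) - (a + b) =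
        (a.comp (X ^ Fintype.card k) - a) + (b.comp (X ^ Fintype.card k) - b) := by
      rw [Polynomial.add_comp]; ring
    rw [h]; exact dvd_add ha hb
  smul_mem' := by
    rintro c P ⟨h0, h⟩
    refine ⟨by simp [Polynomial.coeff_smul, h0], ?_⟩
    have hc : (c • P).comp (X ^ Fintype.card k) - c • P =
        Polynomial.C c * (P.comp (X ^ Fintype.card k) - P) := by
      rw [Polynomial.smul_comp, Polynomial.smul_eq_C_mul, Polynomial.smul_eq_C_mul]; ring
    rw [hc]; exact h.mul_left _

variable {k}

theorem mem_V {n : ℕ} {P : Polynomial k} :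
    P ∈ V k n ↔ P.coeff 0 = 0 ∧ A k n ∣ P.comp (X ^ Fintype.card k) - P := Iff.rfl

theorem isTSpace_V (n : ℕ) : IsTSpace k (V k n) := by
  constructor
  · exact fun P hP => hP.1
  · intro P hP g hg
    obtain ⟨hP0, hPd⟩ := hP
    refine mem_V.mpr ⟨?_, ?_⟩
    · rw [Polynomial.coeff_zero_eq_eval_zero, Polynomial.eval_comp,
        ← Polynomial.coeff_zero_eq_eval_zero, hg, ← Polynomial.coeff_zero_eq_eval_zero, hP0]
    · have key : (P.comp g).comp (X ^ Fintype.card k) - P.comp g =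
          (P.comp (X ^ Fintype.card k) - P).comp g := by
        rw [Polynomial.sub_comp, Polynomial.comp_assoc, Polynomial.comp_assoc,
          Polynomial.X_pow_comp, comp_card]
      rw [key]
      obtain ⟨h, hh⟩ := hPd
      rw [hh, Polynomial.mul_comp]
      exact (A_dvd_comp_A n g).mul_right _

theorem X_not_mem_V {n : ℕ} (hn : 1 < n) : (X : Polynomial k) ∉ V k n := by
  rintro ⟨-, hd⟩
  have hq : 1 < Fintype.card k := Fintype.one_lt_card
  rw [Polynomial.X_comp] at hd
  have hne : (X : Polynomial k) ^ Fintype.card k - X ≠ 0 := by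
    intro h
    have h2 : (X : Polynomial k) ^ Fintype.card k = X := sub_eq_zero.mp h
    have h3 := congrArg Polynomial.natDegree h2
    rw [Polynomial.natDegree_X_pow, Polynomial.natDegree_X] at h3
    omega
  have hdeg := Polynomial.natDegree_le_of_dvd hd hne
  have hA : (A k n).natDegree = Fintype.card k ^ n := by
    rw [A, Polynomial.natDegree_sub_eq_left_of_natDegree_lt, Polynomial.natDegree_X_pow]
    rw [Polynomial.natDegree_X_pow, Polynomial.natDegree_X]
    exact one_lt_pow₀ hq (by omega)
  have hB : ((X : Polynomial k) ^ Fintype.card k - X).natDegree = Fintype.card k := by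
    rw [Polynomial.natDegree_sub_eq_left_of_natDegree_lt, Polynomial.natDegree_X_pow]
    rw [Polynomial.natDegree_X_pow, Polynomial.natDegree_X]
    exact hq
  rw [hA, hB] at hdeg
  have : Fintype.card k < Fintype.card k ^ n := by
    calc Fintype.card k = Fintype.card k ^ 1 := (pow_one _).symm
    _ < Fintype.card k ^ n := Nat.pow_lt_pow_right hq hn
  omega

theorem sum_mod_shift {M : Type*} [AddCommMonoid M] (f : ℕ → M) (ℓ m : ℕ) (hℓ : ℓ.Prime)
    (hm : ¬ ℓ ∣ m) :
    ∑ i ∈ range ℓ, f ((m * i + 1) % ℓ) = ∑ i ∈ range ℓ, f ((m * i) % ℓ) := by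
  haveI := Fact.mk hℓ
  haveI : NeZero ℓ := ⟨hℓ.ne_zero⟩
  have key : ∀ c : ℕ, ∑ i ∈ range ℓ, f ((m * i + c) % ℓ) =
      ∑ z : ZMod ℓ, f (((m : ZMod ℓ) * z + (c : ZMod ℓ)).val) := by
    intro c
    refine Finset.sum_nbij' (fun a => ((a : ZMod ℓ))) (fun z => z.val) ?_ ?_ ?_ ?_ ?_
    · intro a _; exact Finset.mem_univ _
    · intro z _; exact Finset.mem_range.mpr z.val_lt
    · intro a ha; exact ZMod.val_cast_of_lt (Finset.mem_range.mp ha)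
    · intro z _; exact ZMod.natCast_zmod_val z
    · intro a _
      have : ((m : ZMod ℓ) * (a : ZMod ℓ) + (c : ZMod ℓ)) = ((m * a + c : ℕ) : ZMod ℓ) := by
        push_cast; ring
      rw [this, ZMod.val_natCast]
  have hminv : (m : ZMod ℓ) ≠ 0 := by
    rwa [Ne, ZMod.natCast_eq_zero_iff]
  have k1 := key 1
  have k0 := key 0
  simp only [Nat.cast_one] at k1
  simp only [Nat.cast_zero, add_zero] at k0
  rw [k1, k0]
  refine Fintype.sum_equiv (Equiv.addRight ((m : ZMod ℓ)⁻¹)) _ _ ?_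
  intro z
  have h : (m : ZMod ℓ) * (z + (m : ZMod ℓ)⁻¹) = (m : ZMod ℓ) * z + (1 : ZMod ℓ) := by
    rw [mul_add, mul_inv_cancel₀ hminv]
  rw [Equiv.coe_addRight, h]

theorem witness (ℓ m : ℕ) (hℓ : ℓ.Prime) (hm : m.Prime) (hne : ℓ ≠ m) (hℓk : (ℓ : k) ≠ 0) :
    ∃ P : Polynomial k, P ∈ V k ℓ ∧ X - P ∈ V k m := by
  set q := Fintype.card k with hqdef
  set S : Polynomial k := ∑ i ∈ range ℓ, X ^ (q ^ (m * i)) with hSdef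
  have hq : 1 < q := Fintype.one_lt_card
  have hcomp : S.comp (X ^ q) - S = ∑ i ∈ range ℓ, (X ^ (q ^ (m * i + 1)) - X ^ (q ^ (m * i))) := by
    rw [Finset.sum_sub_distrib, hSdef, Polynomial.sum_comp]
    congr 1
    refine Finset.sum_congr rfl fun i _ => ?_
    rw [Polynomial.X_pow_comp, ← pow_mul, ← pow_succ']
  have hS0 : S.coeff 0 = 0 := by
    rw [hSdef, Polynomial.finset_sum_coeff]
    refine Finset.sum_eq_zero fun i _ => ?_
    rw [Polynomial.coeff_X_pow]
    have hp0 : 0 < q ^ (m * i) := pow_pos (show 0 < q by omega) _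
    exact if_neg hp0.ne
  have hlm : ¬ ℓ ∣ m := fun hd => hne ((Nat.prime_dvd_prime_iff_eq hℓ hm).mp hd)
  -- part 1 : A k ℓ divides S∘X^q - S
  have part1 : A k ℓ ∣ S.comp (X ^ q) - S := by
    rw [hcomp]
    have h1 : A k ℓ ∣ ∑ i ∈ range ℓ, ((X : Polynomial k) ^ (q ^ (m * i + 1)) -
        X ^ (q ^ ((m * i + 1) % ℓ))) :=
      Finset.dvd_sum fun i _ => A_dvd_mod ℓ hℓ.pos (m * i + 1)
    have h2 : A k ℓ ∣ ∑ i ∈ range ℓ, ((X : Polynomial k) ^ (q ^ (m * i)) -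
        X ^ (q ^ ((m * i) % ℓ))) :=
      Finset.dvd_sum fun i _ => A_dvd_mod ℓ hℓ.pos (m * i)
    have h3 : ∑ i ∈ range ℓ, (X : Polynomial k) ^ (q ^ ((m * i + 1) % ℓ)) =
        ∑ i ∈ range ℓ, (X : Polynomial k) ^ (q ^ ((m * i) % ℓ)) :=
      sum_mod_shift (fun j => (X : Polynomial k) ^ (q ^ j)) ℓ m hℓ hlm
    have hsplit : ∑ i ∈ range ℓ, ((X : Polynomial k) ^ (q ^ (m * i + 1)) - X ^ (q ^ (m * i))) =
        (∑ i ∈ range ℓ, ((X : Polynomial k) ^ (q ^ (m * i + 1)) - X ^ (q ^ ((m * i + 1) % ℓ)))) -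
        (∑ i ∈ range ℓ, ((X : Polynomial k) ^ (q ^ (m * i)) - X ^ (q ^ ((m * i) % ℓ)))) := by
      rw [Finset.sum_sub_distrib, Finset.sum_sub_distrib, Finset.sum_sub_distrib, h3]
      abel
    rw [hsplit]
    exact dvd_sub h1 h2
  -- part 2 : A k m divides (S∘X^q - S) - ℓ • (X^q - X)
  have part2 : A k m ∣ (S.comp (X ^ q) - S) - (ℓ : Polynomial k) * (X ^ q - X) := by
    have e1 : ∀ i : ℕ, (m * i + 1) % m = 1 := fun i => by
      rw [Nat.mul_add_mod]; exact Nat.mod_eq_of_lt hm.one_lt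
    have e0 : ∀ i : ℕ, (m * i) % m = 0 := fun i => Nat.mul_mod_right m i
    have h5 : A k m ∣ ∑ i ∈ range ℓ, (((X : Polynomial k) ^ (q ^ (m * i + 1)) - X ^ q) -
        (X ^ (q ^ (m * i)) - X)) := by
      refine Finset.dvd_sum fun i _ => dvd_sub ?_ ?_
      · have := A_dvd_mod (k := k) m hm.pos (m * i + 1)
        rwa [e1 i, pow_one] at this
      · have := A_dvd_mod (k := k) m hm.pos (m * i)
        rwa [e0 i, pow_zero, pow_one] at this
    have hsum : ∑ i ∈ range ℓ, (((X : Polynomial k) ^ (q ^ (m * i + 1)) - X ^ q) -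
        (X ^ (q ^ (m * i)) - X)) =
        (S.comp (X ^ q) - S) - (ℓ : Polynomial k) * (X ^ q - X) := by
      rw [hcomp]
      rw [Finset.sum_sub_distrib, Finset.sum_sub_distrib, Finset.sum_sub_distrib,
        Finset.sum_const, Finset.sum_const, Finset.card_range, nsmul_eq_mul, nsmul_eq_mul,
        Finset.sum_sub_distrib]
      ring
    rw [← hsum]
    exact h5
  -- assemble
  refine ⟨Polynomial.C ((ℓ : k))⁻¹ * S, ⟨?_, ?_⟩, ⟨?_, ?_⟩⟩
  · rw [Polynomial.coeff_C_mul, hS0, mul_zero]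
  · have hPc : (Polynomial.C ((ℓ : k))⁻¹ * S).comp (X ^ q) - Polynomial.C ((ℓ : k))⁻¹ * S =
        Polynomial.C ((ℓ : k))⁻¹ * (S.comp (X ^ q) - S) := by
      rw [Polynomial.C_mul_comp]; ring
    rw [hPc]
    exact part1.mul_left _
  · simp [hS0]
  · have hPc : (X - Polynomial.C ((ℓ : k))⁻¹ * S).comp (X ^ q) -
        (X - Polynomial.C ((ℓ : k))⁻¹ * S) =
        -(Polynomial.C ((ℓ : k))⁻¹ * ((S.comp (X ^ q) - S) - (ℓ : Polynomial k) * (X ^ q - X))) := by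
      have hC : Polynomial.C ((ℓ : k))⁻¹ * (ℓ : Polynomial k) = 1 := by
        rw [← Polynomial.C_eq_natCast, ← Polynomial.C_mul, inv_mul_cancel₀ hℓk,
          Polynomial.C_1]
      rw [Polynomial.sub_comp, Polynomial.X_comp, Polynomial.C_mul_comp]
      linear_combination (X - X ^ q : Polynomial k) * hC
    rw [hPc, dvd_neg]
    exact part2.mul_left _

theorem exists_maximal (V₀ : Submodule k (Polynomial k)) (hT : IsTSpace k V₀)
    (hX : (X : Polynomial k) ∉ V₀) :
    ∃ M : Submodule k (Polynomial k), V₀ ≤ M ∧ IsTSpace k M ∧ (X : Polynomial k) ∉ M ∧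
      ∀ U : Submodule k (Polynomial k), IsTSpace k U → M ≤ U → (X : Polynomial k) ∉ U → U = M := by
  have hZ : ∀ c ⊆ {W : Submodule k (Polynomial k) | IsTSpace k W ∧ (X : Polynomial k) ∉ W},
      IsChain (· ≤ ·) c → ∀ y ∈ c,
      ∃ ub ∈ {W : Submodule k (Polynomial k) | IsTSpace k W ∧ (X : Polynomial k) ∉ W},
        ∀ z ∈ c, z ≤ ub := by
    intro c hcs hchain y hy
    have hne : c.Nonempty := ⟨y, hy⟩
    have hdir : DirectedOn (· ≤ ·) c := hchain.directedOn
    refine ⟨sSup c, ⟨⟨?_, ?_⟩, ?_⟩, fun z hz => le_sSup hz⟩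
    · intro P hP
      obtain ⟨W, hWc, hPW⟩ := (Submodule.mem_sSup_of_directed hne hdir).mp hP
      exact (hcs hWc).1.1 P hPW
    · intro P hP g hg
      obtain ⟨W, hWc, hPW⟩ := (Submodule.mem_sSup_of_directed hne hdir).mp hP
      exact le_sSup hWc ((hcs hWc).1.2 P hPW g hg)
    · intro hXs
      obtain ⟨W, hWc, hXW⟩ := (Submodule.mem_sSup_of_directed hne hdir).mp hXs
      exact (hcs hWc).2 hXW
  obtain ⟨M, hle, hmax⟩ := zorn_le_nonempty₀
    {W : Submodule k (Polynomial k) | IsTSpace k W ∧ (X : Polynomial k) ∉ W} hZ V₀ ⟨hT, hX⟩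
  refine ⟨M, hle, hmax.prop.1, hmax.prop.2, fun U hU hMU hXU => ?_⟩
  exact le_antisymm (hmax.2 ⟨hU, hXU⟩ hMU) hMU

end TSpaceAux

/-- If `k` is a finite field of characteristic `p > 2`, then `k[x]₀` has infinitely
many maximal T-spaces. -/
theorem infinitely_many_maximal_TSpaces (k : Type*) [Field k] [Fintype k] (p : ℕ)
    (hp : ringChar k = p) (hp2 : 2 < p) :
    {V : Submodule k (Polynomial k) | IsTSpace k V ∧ Polynomial.X ∉ V ∧
      ∀ U : Submodule k (Polynomial k), IsTSpace k U → V ≤ U → Polynomial.X ∉ U →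
        U = V}.Infinite := by
  classical
  open TSpaceAux in
  haveI : CharP k p := hp ▸ ringChar.charP k
  have hpp : p.Prime := CharP.char_is_prime k p
  have hcast : ∀ ℓ : ℕ, ℓ.Prime → ℓ ≠ p → (ℓ : k) ≠ 0 := by
    intro ℓ hℓ hℓp
    rw [Ne, CharP.cast_eq_zero_iff k p ℓ]
    intro hd
    exact hℓp ((Nat.prime_dvd_prime_iff_eq hpp hℓ).mp hd).symm
  have hinfD : ({n : ℕ | n.Prime} \ {p} : Set ℕ).Infinite :=
    Nat.infinite_setOf_prime.diff (Set.finite_singleton p)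
  haveI := hinfD.to_subtype
  have hchoice : ∀ a : ↥({n : ℕ | n.Prime} \ {p} : Set ℕ),
      ∃ M : Submodule k (Polynomial k), TSpaceAux.V k a.1 ≤ M ∧ IsTSpace k M ∧
        (Polynomial.X : Polynomial k) ∉ M ∧
        ∀ U : Submodule k (Polynomial k), IsTSpace k U → M ≤ U →
          (Polynomial.X : Polynomial k) ∉ U → U = M := by
    intro a
    have ha : a.1.Prime := a.2.1
    exact TSpaceAux.exists_maximal (TSpaceAux.V k a.1) (TSpaceAux.isTSpace_V a.1)
      (TSpaceAux.X_not_mem_V ha.one_lt)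
  set F : ↥({n : ℕ | n.Prime} \ {p} : Set ℕ) → Submodule k (Polynomial k) :=
    fun a => (hchoice a).choose with hF
  refine Set.infinite_of_injective_forall_mem (f := F) ?_ ?_
  · -- injectivity
    intro a b hab
    by_contra hne
    have hvne : a.1 ≠ b.1 := fun h => hne (Subtype.ext h)
    obtain ⟨P, hPa, hPb⟩ := TSpaceAux.witness a.1 b.1 a.2.1 b.2.1 hvne
      (hcast a.1 a.2.1 (by simpa using a.2.2))
    obtain ⟨haM, -, haX, -⟩ := (hchoice a).choose_spec
    obtain ⟨hbM, -, -, -⟩ := (hchoice b).choose_spec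
    apply haX
    have h1 : P ∈ F a := haM hPa
    have h2 : Polynomial.X - P ∈ F a := by
      rw [hab]; exact hbM hPb
    have := Submodule.add_mem (F a) h1 h2
    rwa [add_sub_cancel] at this
  · -- membership
    intro a
    obtain ⟨-, h1, h2, h3⟩ := (hchoice a).choose_spec
    exact ⟨h1, h2, h3⟩
end

section
/- Let k be a finite field with q elements and characteristic 2, let n ≥ 1, and let W_n denote the T-space of k[x]_0 generated by {x + x^q, x^(q^n + 1)}. Then W_n equals the k-linear span of the set {x^i + x^(qi) : i ≥ 1} ∪ {x^((q^n+1)i) : i ≥ 1} ∪ {x^(q^n·i + j) + x^(i + q^n·j) : i > j ≥ 1}. -/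
set_option linter.unusedSectionVars false
open Polynomial


section Aux
variable {k : Type*} [Field k] [Fintype k] [CharP k 2] {q m : ℕ}

private lemma pow_card_fix (hq : Fintype.card k = q) (c : k) : c ^ q = c := by
  rw [← hq]; exact FiniteField.pow_card c

private lemma pow_card_pow_fix (hq : Fintype.card k = q) (n : ℕ) (c : k) : c ^ q ^ n = c := by
  rw [← hq]; exact FiniteField.pow_card_pow n c

private lemma frob_add (hm : q = 2 ^ m) (a b : k[X]) : (a + b) ^ q = a ^ q + b ^ q := by
  subst hm; exact add_pow_char_pow a b 2 m

private lemma frob_smul (hq : Fintype.card k = q) (c : k) (a : k[X]) :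
    (c • a) ^ q = c • a ^ q := by
  rw [_root_.smul_pow, pow_card_fix hq]

private lemma frobn_add (hm : q = 2 ^ m) (n : ℕ) (a b : k[X]) :
    (a + b) ^ q ^ n = a ^ q ^ n + b ^ q ^ n := by
  have : q ^ n = 2 ^ (m * n) := by rw [hm, pow_mul]
  rw [this]; exact add_pow_char_pow a b 2 (m * n)

private lemma frobn_smul (hq : Fintype.card k = q) (n : ℕ) (c : k) (a : k[X]) :
    (c • a) ^ q ^ n = c • a ^ q ^ n := by
  rw [_root_.smul_pow, pow_card_pow_fix hq]

private lemma mem_monSpan {h : k[X]} (h0 : h.coeff 0 = 0) :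
    h ∈ Submodule.span k {f : k[X] | ∃ t : ℕ, 1 ≤ t ∧ f = X ^ t} := by
  nth_rewrite 1 [h.as_sum_support]
  refine Submodule.sum_mem _ fun t ht => ?_
  have ht1 : 1 ≤ t := by
    rcases Nat.eq_zero_or_pos t with rfl | h'
    · exact absurd h0 (Polynomial.mem_support_iff.mp ht)
    · exact h'
  rw [← smul_X_eq_monomial]
  exact Submodule.smul_mem _ _ (Submodule.subset_span ⟨t, ht1, rfl⟩)


private lemma L1 (hq : Fintype.card k = q) (hm : q = 2 ^ m)
    {M : Submodule k k[X]}
    (hA : ∀ i : ℕ, 1 ≤ i → (X : k[X]) ^ i + X ^ (q * i) ∈ M)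
    {h : k[X]} (hsp : h ∈ Submodule.span k {f : k[X] | ∃ t : ℕ, 1 ≤ t ∧ f = X ^ t}) :
    h + h ^ q ∈ M := by
  have hq0 : q ≠ 0 := by rw [hm]; positivity
  induction hsp using Submodule.span_induction with
  | mem f hf =>
    obtain ⟨t, ht, rfl⟩ := hf
    have e : (X : k[X]) ^ t + (X ^ t) ^ q = X ^ t + X ^ (q * t) := by
      rw [← pow_mul, mul_comm]
    rw [e]; exact hA t ht
  | zero => rw [zero_pow hq0, add_zero]; exact M.zero_mem
  | add x y hx hy ihx ihy =>
    have e : (x + y) + (x + y) ^ q = (x + x ^ q) + (y + y ^ q) := by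
      rw [frob_add hm]; ring
    rw [e]; exact M.add_mem ihx ihy
  | smul c x hx ih =>
    have e : (c • x) + (c • x) ^ q = c • (x + x ^ q) := by
      rw [frob_smul hq, ← smul_add]
    rw [e]; exact M.smul_mem _ ih

private lemma L2 (hq : Fintype.card k = q) (hm : q = 2 ^ m) (n : ℕ)
    {M : Submodule k k[X]}
    (hC : ∀ i j : ℕ, 1 ≤ j → j < i →
      (X : k[X]) ^ (q ^ n * i + j) + X ^ (i + q ^ n * j) ∈ M)
    {a b : k[X]}
    (ha : a ∈ Submodule.span k {f : k[X] | ∃ t : ℕ, 1 ≤ t ∧ f = X ^ t})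
    (hb : b ∈ Submodule.span k {f : k[X] | ∃ t : ℕ, 1 ≤ t ∧ f = X ^ t}) :
    a ^ q ^ n * b + a * b ^ q ^ n ∈ M := by
  have hQ0 : q ^ n ≠ 0 := by rw [hm]; positivity
  induction ha using Submodule.span_induction with
  | mem f hf =>
    obtain ⟨t, ht, rfl⟩ := hf
    induction hb using Submodule.span_induction with
    | mem g hg =>
      obtain ⟨s, hs, rfl⟩ := hg
      have e : ((X : k[X]) ^ t) ^ q ^ n * X ^ s + X ^ t * (X ^ s) ^ q ^ n
          = X ^ (q ^ n * t + s) + X ^ (t + q ^ n * s) := by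
        rw [← pow_mul, ← pow_mul, ← pow_add, ← pow_add, mul_comm t (q ^ n),
          mul_comm s (q ^ n)]
      rw [e]
      rcases lt_trichotomy t s with hts | rfl | hst
      · have h' := hC s t ht hts
        rw [Nat.add_comm (q ^ n * s) t, Nat.add_comm s (q ^ n * t), add_comm] at h'
        exact h'
      · rw [Nat.add_comm t (q ^ n * t), CharTwo.add_self_eq_zero]
        exact M.zero_mem
      · exact hC t s hs hst
    | zero =>
      rw [mul_zero, zero_pow hQ0, mul_zero, add_zero]; exact M.zero_mem
    | add y z hy hz ihy ihz =>
      have e : ((X : k[X]) ^ t) ^ q ^ n * (y + z) + X ^ t * (y + z) ^ q ^ n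
          = (((X : k[X]) ^ t) ^ q ^ n * y + X ^ t * y ^ q ^ n)
            + (((X : k[X]) ^ t) ^ q ^ n * z + X ^ t * z ^ q ^ n) := by
        rw [frobn_add hm]; ring
      rw [e]; exact M.add_mem ihy ihz
    | smul c y hy ih =>
      have e : ((X : k[X]) ^ t) ^ q ^ n * (c • y) + X ^ t * (c • y) ^ q ^ n
          = c • (((X : k[X]) ^ t) ^ q ^ n * y + X ^ t * y ^ q ^ n) := by
        rw [frobn_smul hq, mul_smul_comm, mul_smul_comm, ← smul_add]
      rw [e]; exact M.smul_mem _ ih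
  | zero =>
    rw [zero_pow hQ0, zero_mul, zero_mul, add_zero]; exact M.zero_mem
  | add y z hy hz ihy ihz =>
    have e : (y + z) ^ q ^ n * b + (y + z) * b ^ q ^ n
        = (y ^ q ^ n * b + y * b ^ q ^ n) + (z ^ q ^ n * b + z * b ^ q ^ n) := by
      rw [frobn_add hm]; ring
    rw [e]; exact M.add_mem ihy ihz
  | smul c y hy ih =>
    have e : (c • y) ^ q ^ n * b + (c • y) * b ^ q ^ n
        = c • (y ^ q ^ n * b + y * b ^ q ^ n) := by
      rw [frobn_smul hq, smul_mul_assoc, smul_mul_assoc, ← smul_add]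
    rw [e]; exact M.smul_mem _ ih

private lemma L3 (hq : Fintype.card k = q) (hm : q = 2 ^ m) (n : ℕ)
    {M : Submodule k k[X]}
    (hB : ∀ i : ℕ, 1 ≤ i → (X : k[X]) ^ ((q ^ n + 1) * i) ∈ M)
    (hC : ∀ i j : ℕ, 1 ≤ j → j < i →
      (X : k[X]) ^ (q ^ n * i + j) + X ^ (i + q ^ n * j) ∈ M)
    {h : k[X]}
    (hsp : h ∈ Submodule.span k {f : k[X] | ∃ t : ℕ, 1 ≤ t ∧ f = X ^ t}) :
    h ^ q ^ n * h ∈ M := by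
  have hQ0 : q ^ n ≠ 0 := by rw [hm]; positivity
  induction hsp using Submodule.span_induction with
  | mem f hf =>
    obtain ⟨t, ht, rfl⟩ := hf
    have e : ((X : k[X]) ^ t) ^ q ^ n * X ^ t = X ^ ((q ^ n + 1) * t) := by
      rw [← pow_mul, ← pow_add]; congr 1; ring
    rw [e]; exact hB t ht
  | zero => rw [mul_zero]; exact M.zero_mem
  | add x y hx hy ihx ihy =>
    have e : (x + y) ^ q ^ n * (x + y)
        = (x ^ q ^ n * x + y ^ q ^ n * y) + (x ^ q ^ n * y + x * y ^ q ^ n) := by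
      rw [frobn_add hm]; ring
    rw [e]
    exact M.add_mem (M.add_mem ihx ihy) (L2 hq hm n hC hx hy)
  | smul c x hx ih =>
    have e : (c • x) ^ q ^ n * (c • x) = (c * c) • (x ^ q ^ n * x) := by
      rw [frobn_smul hq, smul_mul_assoc, mul_smul_comm, smul_smul]
    rw [e]; exact M.smul_mem _ ih

end Aux

/-- For a finite field `k` with `q` elements of characteristic 2 and `n ≥ 1`, the
T-space `Wₙ` generated by `{x + x^q, x^(qⁿ+1)}` is the `k`-linear span of
`{xⁱ + x^(qi) : i ≥ 1} ∪ {x^((qⁿ+1)i) : i ≥ 1} ∪ {x^(qⁿi+j) + x^(i+qⁿj) : i > j ≥ 1}`. -/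
theorem Wn_spanning_set (k : Type*) [Field k] [Fintype k] (q : ℕ)
    (hq : Fintype.card k = q) (h2 : ringChar k = 2) (n : ℕ) (hn : 1 ≤ n) :
    TSpaceGen k {Polynomial.X + Polynomial.X ^ q, Polynomial.X ^ (q ^ n + 1)} =
      Submodule.span k
        ({f : Polynomial k | ∃ i : ℕ, 1 ≤ i ∧ f = Polynomial.X ^ i + Polynomial.X ^ (q * i)} ∪
         {f : Polynomial k | ∃ i : ℕ, 1 ≤ i ∧ f = Polynomial.X ^ ((q ^ n + 1) * i)} ∪
         {f : Polynomial k | ∃ i j : ℕ, 1 ≤ j ∧ j < i ∧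
            f = Polynomial.X ^ (q ^ n * i + j) + Polynomial.X ^ (i + q ^ n * j)}) := by
  haveI : CharP k 2 := h2 ▸ ringChar.charP k
  obtain ⟨m, -, hcard⟩ := FiniteField.card k 2
  have hm : q = 2 ^ (m : ℕ) := by rw [← hq, hcard]
  have hq0 : q ≠ 0 := by rw [hm]; positivity
  set M := Submodule.span k
        ({f : Polynomial k | ∃ i : ℕ, 1 ≤ i ∧ f = Polynomial.X ^ i + Polynomial.X ^ (q * i)} ∪
         {f : Polynomial k | ∃ i : ℕ, 1 ≤ i ∧ f = Polynomial.X ^ ((q ^ n + 1) * i)} ∪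
         {f : Polynomial k | ∃ i j : ℕ, 1 ≤ j ∧ j < i ∧
            f = Polynomial.X ^ (q ^ n * i + j) + Polynomial.X ^ (i + q ^ n * j)}) with hMdef
  have hA : ∀ i : ℕ, 1 ≤ i → (X : k[X]) ^ i + X ^ (q * i) ∈ M :=
    fun i hi => Submodule.subset_span (Or.inl (Or.inl ⟨i, hi, rfl⟩))
  have hB : ∀ i : ℕ, 1 ≤ i → (X : k[X]) ^ ((q ^ n + 1) * i) ∈ M :=
    fun i hi => Submodule.subset_span (Or.inl (Or.inr ⟨i, hi, rfl⟩))
  have hC : ∀ i j : ℕ, 1 ≤ j → j < i →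
      (X : k[X]) ^ (q ^ n * i + j) + X ^ (i + q ^ n * j) ∈ M :=
    fun i j hj hij => Submodule.subset_span (Or.inr ⟨i, j, hj, hij, rfl⟩)
  have hgp : ∀ (g : k[X]) (i : ℕ), 1 ≤ i → g.coeff 0 = 0 → (g ^ i).coeff 0 = 0 := by
    intro g i hi hg
    rw [coeff_zero_eq_eval_zero, eval_pow, ← coeff_zero_eq_eval_zero, hg,
      zero_pow (Nat.one_le_iff_ne_zero.mp hi)]
  have hx0 : ∀ i : ℕ, 1 ≤ i → ((X : k[X]) ^ i).coeff 0 = 0 := by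
    intro i hi; rw [coeff_X_pow, if_neg (by omega)]
  apply le_antisymm
  · -- TSpaceGen ≤ M
    apply sInf_le
    refine ⟨⟨?_, ?_⟩, ?_⟩
    · -- zero constant term
      have hker : M ≤ LinearMap.ker (lcoeff k 0) := by
        rw [hMdef]
        apply Submodule.span_le.mpr
        rintro f ((⟨i, hi, rfl⟩ | ⟨i, hi, rfl⟩) | ⟨i, j, hj, hij, rfl⟩)
        · simp only [SetLike.mem_coe, LinearMap.mem_ker, lcoeff_apply, coeff_add, coeff_X_pow]
          rw [if_neg (by omega), if_neg
            (fun h => Nat.mul_ne_zero hq0 (Nat.one_le_iff_ne_zero.mp hi) h.symm), add_zero]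
        · simp only [SetLike.mem_coe, LinearMap.mem_ker, lcoeff_apply, coeff_X_pow]
          rw [if_neg (fun h =>
            Nat.mul_ne_zero (Nat.succ_ne_zero _) (Nat.one_le_iff_ne_zero.mp hi) h.symm)]
        · simp only [SetLike.mem_coe, LinearMap.mem_ker, lcoeff_apply, coeff_add, coeff_X_pow]
          rw [if_neg (Nat.add_pos_right _ hj).ne,
            if_neg (Nat.add_pos_left (by omega) _).ne, add_zero]
      intro p hp
      simpa using hker hp
    · -- closed under composition
      intro p hp g hg
      induction hp using Submodule.span_induction with
      | mem f hf =>
        rcases hf with (⟨i, hi, rfl⟩ | ⟨i, hi, rfl⟩) | ⟨i, j, hj, hij, rfl⟩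
        · rw [add_comp, X_pow_comp, X_pow_comp, mul_comm q i, pow_mul]
          exact L1 hq hm hA (mem_monSpan (hgp g i hi hg))
        · rw [X_pow_comp]
          have e : g ^ ((q ^ n + 1) * i) = (g ^ i) ^ q ^ n * g ^ i := by
            rw [← pow_mul, ← pow_add]; congr 1; ring
          rw [e]; exact L3 hq hm n hB hC (mem_monSpan (hgp g i hi hg))
        · rw [add_comp, X_pow_comp, X_pow_comp]
          have e1 : g ^ (q ^ n * i + j) = (g ^ i) ^ q ^ n * g ^ j := by
            rw [← pow_mul, ← pow_add]; congr 1; ring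
          have e2 : g ^ (i + q ^ n * j) = g ^ i * (g ^ j) ^ q ^ n := by
            rw [← pow_mul, ← pow_add]; congr 1; ring
          rw [e1, e2]
          exact L2 hq hm n hC (mem_monSpan (hgp g i (by omega) hg))
            (mem_monSpan (hgp g j hj hg))
      | zero => rw [zero_comp]; exact M.zero_mem
      | add x y hx hy ihx ihy => rw [add_comp]; exact M.add_mem ihx ihy
      | smul c x hx ih => rw [smul_comp]; exact M.smul_mem _ ih
    · -- generators in M
      intro f hf
      simp only [Set.mem_insert_iff, Set.mem_singleton_iff] at hf
      rcases hf with rfl | rfl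
      · have := hA 1 le_rfl; rwa [pow_one, mul_one] at this
      · have := hB 1 le_rfl; rwa [mul_one] at this
  · -- M ≤ TSpaceGen
    apply Submodule.span_le.mpr
    intro f hf
    apply Submodule.mem_sInf.mpr
    rintro V ⟨⟨hV0, hVc⟩, hVS⟩
    have hgen1 : (X + X ^ q : k[X]) ∈ V := hVS (Set.mem_insert _ _)
    have hgen2 : (X ^ (q ^ n + 1) : k[X]) ∈ V := hVS (Set.mem_insert_of_mem _ rfl)
    have hBV : ∀ i : ℕ, 1 ≤ i → (X : k[X]) ^ ((q ^ n + 1) * i) ∈ V := by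
      intro i hi
      have hcomp := hVc _ hgen2 (X ^ i) (hx0 i hi)
      rwa [X_pow_comp, ← pow_mul, mul_comm i (q ^ n + 1)] at hcomp
    rcases hf with (⟨i, hi, rfl⟩ | ⟨i, hi, rfl⟩) | ⟨i, j, hj, hij, rfl⟩
    · have hcomp := hVc _ hgen1 (X ^ i) (hx0 i hi)
      rwa [add_comp, X_comp, X_pow_comp, ← pow_mul, mul_comm i q] at hcomp
    · exact hBV i hi
    · have hu0 : ((X : k[X]) ^ i + X ^ j).coeff 0 = 0 := by
        rw [coeff_add, hx0 i (by omega), hx0 j hj, add_zero]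
      have hcomp := hVc _ hgen2 (X ^ i + X ^ j) hu0
      rw [X_pow_comp] at hcomp
      have hexp : ((X : k[X]) ^ i + X ^ j) ^ (q ^ n + 1)
          = X ^ ((q ^ n + 1) * i) + (X ^ (q ^ n * i + j) + X ^ (i + q ^ n * j))
            + X ^ ((q ^ n + 1) * j) := by
        rw [pow_succ, frobn_add hm, ← pow_mul, ← pow_mul, add_mul, mul_add, mul_add,
          ← pow_add, ← pow_add, ← pow_add, ← pow_add,
          show i * q ^ n + i = (q ^ n + 1) * i from by ring,
          show i * q ^ n + j = q ^ n * i + j from by ring,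
          show j * q ^ n + i = i + q ^ n * j from by ring,
          show j * q ^ n + j = (q ^ n + 1) * j from by ring]
        ring
      rw [hexp] at hcomp
      have e : (X : k[X]) ^ (q ^ n * i + j) + X ^ (i + q ^ n * j)
          = (X ^ ((q ^ n + 1) * i) + (X ^ (q ^ n * i + j) + X ^ (i + q ^ n * j))
              + X ^ ((q ^ n + 1) * j)) - X ^ ((q ^ n + 1) * i) - X ^ ((q ^ n + 1) * j) := by
        ring
      rw [e]
      exact V.sub_mem (V.sub_mem hcomp (hBV i (by omega))) (hBV j hj)
end

section
/- Let k be a finite field with q elements and characteristic 2. Then for every integer m ≥ 1, the T-space W_m of k[x]_0 generated by {x + x^q, x^(q^m + 1)} is a proper T-space of k[x]_0; that is, x ∉ W_m. -/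
open Polynomial in
/-- For a finite field `k` with `q` elements of characteristic 2 and `m ≥ 1`, the
T-space `Wₘ` generated by `{x + x^q, x^(qᵐ+1)}` is a proper T-space of `k[x]₀`. -/
theorem Wm_proper (k : Type*) [Field k] [Fintype k] (q : ℕ)
    (hq : Fintype.card k = q) (h2 : ringChar k = 2) (m : ℕ) (hm : 1 ≤ m) :
    Polynomial.X ∉ TSpaceGen k {Polynomial.X + Polynomial.X ^ q,
      Polynomial.X ^ (q ^ m + 1)} := by
  classical
  haveI hchar : CharP k 2 := ringChar.of_eq h2
  haveI hcharX : CharP (Polynomial k) 2 := charP_of_injective_algebraMap' (A := Polynomial k) k 2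
  haveI : ExpChar (Polynomial k) 2 := .prime Nat.prime_two
  obtain ⟨sn, hp2, hcard⟩ := FiniteField.card k 2
  have hq2 : q = 2 ^ (sn : ℕ) := by rw [← hq, hcard]
  have hqge : 2 ≤ q := by
    rw [hq2]
    calc 2 = 2 ^ 1 := (pow_one 2).symm
    _ ≤ 2 ^ (sn : ℕ) := Nat.pow_le_pow_right (by norm_num) sn.one_le
  set M : ℕ := q ^ m + 1 with hM
  have hqm2 : 2 ≤ q ^ m := le_trans hqge (Nat.le_self_pow (by omega) q)
  have hM3 : 3 ≤ M := by omega
  haveI : Fact (1 < M) := ⟨by omega⟩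
  -- arithmetic of powers of q mod M
  have hum : ((q : ZMod M)) ^ m = -1 := by
    have h0 : ((q ^ m + 1 : ℕ) : ZMod M) = 0 := by
      rw [← hM]; exact ZMod.natCast_self M
    push_cast at h0
    exact eq_neg_of_add_eq_zero_left h0
  have hu2m : ((q : ZMod M)) ^ (2 * m) = 1 := by
    rw [two_mul, pow_add, hum]; ring
  set P : ZMod M → Prop := fun x => ∃ t : ℕ, ((q : ZMod M)) ^ t = x with hPdef
  have hPmul : ∀ x : ZMod M, P ((q : ZMod M) * x) ↔ P x := by
    intro x
    constructor
    · rintro ⟨t, ht⟩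
      refine ⟨2 * m - 1 + t, ?_⟩
      have h1 : ((q : ZMod M)) ^ (2 * m - 1) * ((q : ZMod M) * x) = x := by
        rw [← mul_assoc, ← pow_succ]
        rw [show 2 * m - 1 + 1 = 2 * m by omega, hu2m, one_mul]
      rw [pow_add, ht, h1]
    · rintro ⟨t, ht⟩
      exact ⟨t + 1, by rw [pow_succ, ht, mul_comm]⟩
  have hPkey : ∀ y : ZMod M, P y → P (((q : ZMod M)) ^ m * y) := by
    rintro y ⟨t, ht⟩
    exact ⟨m + t, by rw [pow_add, ht]⟩
  have hPneg : ∀ x : ZMod M, P (-x) ↔ P x := by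
    intro x
    constructor
    · intro h
      have h2' := hPkey _ h
      rw [hum] at h2'
      simpa using h2'
    · intro h
      have h2' := hPkey _ h
      rwa [hum, neg_one_mul] at h2'
  have hP0 : ¬ P 0 := by
    rintro ⟨t, ht⟩
    have h1 : (1 : ZMod M) = 0 := by
      calc (1 : ZMod M) = ((q : ZMod M)) ^ (2 * m * (t + 1)) := by
            rw [pow_mul, hu2m, one_pow]
      _ = ((q : ZMod M)) ^ t * ((q : ZMod M)) ^ (2 * m * (t + 1) - t) := by
            rw [← pow_add, Nat.add_sub_cancel' (by nlinarith)]
      _ = 0 := by rw [ht, zero_mul]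
    exact one_ne_zero h1
  -- the coefficient function
  set c : ℕ → k := fun n => if P ((n : ZMod M)) then 1 else 0 with hcdef
  have hcq : ∀ n : ℕ, c (n * q) = c n := by
    intro n
    have hx : ((n * q : ℕ) : ZMod M) = (q : ZMod M) * (n : ZMod M) := by
      push_cast; ring
    simp only [hcdef, hx]
    by_cases h : P ((n : ZMod M))
    · rw [if_pos h, if_pos ((hPmul _).2 h)]
    · rw [if_neg h, if_neg (fun hh => h ((hPmul _).1 hh))]
  have hcsym : ∀ i j : ℕ, c (i * q ^ m + j) = c (j * q ^ m + i) := by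
    intro i j
    have h₁ : ((i * q ^ m + j : ℕ) : ZMod M) = -(i : ZMod M) + (j : ZMod M) := by
      push_cast; rw [hum]; ring
    have h₂ : ((j * q ^ m + i : ℕ) : ZMod M) = -(-(i : ZMod M) + (j : ZMod M)) := by
      push_cast; rw [hum]; ring
    simp only [hcdef, h₁, h₂]
    by_cases h : P (-(i : ZMod M) + (j : ZMod M))
    · rw [if_pos h, if_pos ((hPneg _).2 h)]
    · rw [if_neg h, if_neg (fun hh => h ((hPneg _).1 hh))]
  have hcM : ∀ n : ℕ, c (n * M) = 0 := by
    intro n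
    have hx : ((n * M : ℕ) : ZMod M) = 0 := by
      push_cast [ZMod.natCast_self]; ring
    simp only [hcdef, hx, if_neg hP0]
  have hc1 : c 1 = 1 := by
    simp only [hcdef]
    rw [if_pos ⟨0, by norm_num⟩]
  -- the linear functional
  set Φ : Polynomial k → k := fun p => p.sum fun n a => c n * a with hΦdef
  have Φ_add : ∀ p r : Polynomial k, Φ (p + r) = Φ p + Φ r := fun p r =>
    Polynomial.sum_add_index p r _ (fun n => mul_zero _) (fun a b₁ b₂ => mul_add _ _ _)
  have Φ_zero : Φ 0 = 0 := Polynomial.sum_zero_index _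
  have Φ_smul : ∀ (b : k) (p : Polynomial k), Φ (b • p) = b * Φ p := by
    intro b p
    simp only [hΦdef]
    rw [Polynomial.sum_smul_index p b _ (fun i => mul_zero _)]
    simp only [Polynomial.sum, Finset.mul_sum]
    exact Finset.sum_congr rfl fun n _ => by ring
  have Φ_monomial : ∀ (n : ℕ) (a : k), Φ (monomial n a) = c n * a := fun n a =>
    Polynomial.sum_monomial_index a _ (mul_zero _)
  have Φ_sum : ∀ {ι : Type} (s : Finset ι) (f : ι → Polynomial k),
      Φ (∑ i ∈ s, f i) = ∑ i ∈ s, Φ (f i) := by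
    intro ι s f
    induction s using Finset.cons_induction with
    | empty => simpa using Φ_zero
    | cons a s ha ih => rw [Finset.sum_cons, Finset.sum_cons, Φ_add, ih]
  -- Frobenius
  have frob : ∀ (e : ℕ), (∀ a : k, a ^ 2 ^ e = a) → ∀ g : Polynomial k,
      g ^ 2 ^ e = ∑ i ∈ g.support, monomial (i * 2 ^ e) (g.coeff i) := by
    intro e he g
    conv_lhs => rw [g.as_sum_support]
    rw [sum_pow_char_pow]
    exact Finset.sum_congr rfl fun i _ => by rw [monomial_pow, he]
  have hgq : ∀ g : Polynomial k, g ^ q = ∑ i ∈ g.support, monomial (i * q) (g.coeff i) := by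
    intro g
    have he : ∀ a : k, a ^ 2 ^ (sn : ℕ) = a := by
      intro a
      rw [← hq2, ← hq]
      exact FiniteField.pow_card a
    rw [hq2]
    exact frob _ he g
  have hgqm : ∀ g : Polynomial k,
      g ^ (q ^ m) = ∑ i ∈ g.support, monomial (i * q ^ m) (g.coeff i) := by
    intro g
    have hqm : q ^ m = 2 ^ ((sn : ℕ) * m) := by rw [hq2, ← pow_mul]
    have he : ∀ a : k, a ^ 2 ^ ((sn : ℕ) * m) = a := by
      intro a
      rw [← hqm, ← hq]
      exact FiniteField.pow_card_pow m a
    rw [hqm]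
    exact frob _ he g
  have hmulmono : ∀ (n : ℕ) (a : k) (g : Polynomial k),
      monomial n a * g = ∑ j ∈ g.support, monomial (n + j) (a * g.coeff j) := by
    intro n a g
    conv_lhs => rw [g.as_sum_support]
    rw [Finset.mul_sum]
    exact Finset.sum_congr rfl fun j _ => by rw [monomial_mul_monomial]
  -- the two generator computations
  have hA : ∀ g : Polynomial k, Φ (g + g ^ q) = 0 := by
    intro g
    rw [Φ_add, hgq g, Φ_sum]
    have h1 : ∑ i ∈ g.support, Φ (monomial (i * q) (g.coeff i)) = Φ g := by
      rw [show Φ g = ∑ n ∈ g.support, c n * g.coeff n from rfl]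
      exact Finset.sum_congr rfl fun i _ => by rw [Φ_monomial, hcq]
    rw [h1]
    exact CharTwo.add_self_eq_zero _
  have hB : ∀ g : Polynomial k, Φ (g ^ (q ^ m + 1)) = 0 := by
    intro g
    rw [pow_succ, hgqm g, Finset.sum_mul]
    rw [Φ_sum]
    have h1 : ∀ i ∈ g.support, Φ (monomial (i * q ^ m) (g.coeff i) * g)
        = ∑ j ∈ g.support, c (i * q ^ m + j) * (g.coeff i * g.coeff j) := by
      intro i _
      rw [hmulmono, Φ_sum]
      exact Finset.sum_congr rfl fun j _ => Φ_monomial _ _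
    rw [Finset.sum_congr rfl h1, ← Finset.sum_product']
    refine Finset.sum_involution (fun x _ => (x.2, x.1)) ?_ ?_ ?_ ?_
    · rintro ⟨i, j⟩ _
      show c (i * q ^ m + j) * (g.coeff i * g.coeff j)
          + c (j * q ^ m + i) * (g.coeff j * g.coeff i) = 0
      rw [hcsym, mul_comm (g.coeff j)]
      exact CharTwo.add_self_eq_zero _
    · rintro ⟨i, j⟩ _ hne heq
      apply hne
      have hij : j = i := congrArg Prod.fst heq
      subst hij
      show c (j * q ^ m + j) * (g.coeff j * g.coeff j) = 0
      rw [show j * q ^ m + j = j * M by rw [hM]; ring, hcM, zero_mul]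
    · rintro ⟨i, j⟩ hmem
      rw [Finset.mem_product] at hmem ⊢
      exact ⟨hmem.2, hmem.1⟩
    · rintro ⟨i, j⟩ _
      rfl
  -- the T-space V
  set V : Submodule k (Polynomial k) :=
    { carrier := {p | p.coeff 0 = 0 ∧ ∀ g : Polynomial k, g.coeff 0 = 0 → Φ (p.comp g) = 0}
      add_mem' := by
        rintro p r ⟨hp0, hp⟩ ⟨hr0, hr⟩
        refine ⟨by simp [hp0, hr0], fun g hg => ?_⟩
        rw [Polynomial.add_comp, Φ_add, hp g hg, hr g hg, add_zero]
      zero_mem' := by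
        refine ⟨by simp, fun g hg => ?_⟩
        rw [Polynomial.zero_comp]
        exact Φ_zero
      smul_mem' := by
        rintro b p ⟨hp0, hp⟩
        refine ⟨by simp [hp0], fun g hg => ?_⟩
        rw [Polynomial.smul_comp, Φ_smul, hp g hg, mul_zero] } with hVdef
  have hcomp0 : ∀ p g : Polynomial k, p.coeff 0 = 0 → g.coeff 0 = 0 →
      (p.comp g).coeff 0 = 0 := by
    intro p g hp0 hg0
    rw [Polynomial.coeff_zero_eq_eval_zero, Polynomial.eval_comp,
      show g.eval 0 = 0 from by rw [← Polynomial.coeff_zero_eq_eval_zero]; exact hg0,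
      ← Polynomial.coeff_zero_eq_eval_zero]
    exact hp0
  have hVT : IsTSpace k V := by
    constructor
    · exact fun p hp => hp.1
    · rintro p ⟨hp0, hp⟩ g hg
      refine ⟨hcomp0 p g hp0 hg, fun g' hg' => ?_⟩
      rw [Polynomial.comp_assoc]
      exact hp (g.comp g') (hcomp0 g g' hg hg')
  have hVS : ({Polynomial.X + Polynomial.X ^ q, Polynomial.X ^ (q ^ m + 1)} : Set (Polynomial k))
      ⊆ (V : Set (Polynomial k)) := by
    intro p hp
    rw [Set.mem_insert_iff, Set.mem_singleton_iff] at hp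
    rcases hp with rfl | rfl
    · refine ⟨?_, fun g hg => ?_⟩
      · simp only [Polynomial.coeff_add, Polynomial.coeff_X_zero, Polynomial.coeff_X_pow]
        rw [if_neg (by omega : ¬ 0 = q)]
        ring
      · rw [Polynomial.add_comp, Polynomial.X_comp, Polynomial.pow_comp, Polynomial.X_comp]
        exact hA g
    · refine ⟨?_, fun g hg => ?_⟩
      · simp [Polynomial.coeff_X_pow]
      · rw [Polynomial.pow_comp, Polynomial.X_comp]
        exact hB g
  intro hx
  have hle : TSpaceGen k {Polynomial.X + Polynomial.X ^ q, Polynomial.X ^ (q ^ m + 1)} ≤ V :=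
    sInf_le ⟨hVT, hVS⟩
  have hXV : Polynomial.X ∈ V := hle hx
  obtain ⟨-, hXV2⟩ := hXV
  have hfin := hXV2 Polynomial.X Polynomial.coeff_X_zero
  rw [Polynomial.X_comp, show (Polynomial.X : Polynomial k) = monomial 1 1 from
    (Polynomial.monomial_one_one_eq_X).symm, Φ_monomial, hc1, one_mul] at hfin
  exact one_ne_zero hfin
end

section
/- Let k be a finite field with q elements and characteristic 2, and for each integer t ≥ 1 let W_t denote the T-space of k[x]_0 generated by {x + x^q, x^(q^t + 1)}. Then for all nonnegative integers n, m with n ≠ m, W_(q^n) + W_(q^m) = k[x]_0; that is, x ∈ W_(q^n) + W_(q^m). -/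
open Polynomial

lemma arith_aux (q t u : ℕ) (hq : 2 ≤ q) (hqe : 2 ∣ q) (ht : 1 ≤ t) (hu : 1 ≤ u)
    (htu : 2*t ∣ u) :
    ∃ a b e v, 1 ≤ a ∧ 1 ≤ b ∧ 1 ≤ e ∧
      a * q^t + b = q^v ∧ a + b * q^t = e * (q^u + 1) := by
  set M := q^u + 1 with hM
  haveI : NeZero M := ⟨Nat.succ_ne_zero _⟩
  have hq1 : 1 ≤ q := by omega
  have hqu1 : 1 ≤ q^u := Nat.one_le_pow _ _ (by omega)
  have hqueven : 2 ∣ q^u := hqe.trans (dvd_pow_self q (by omega))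
  have hModd : ¬ 2 ∣ M := by omega
  have hdvd1 : q^t*q^t - 1 ∣ q^u - 1 := by
    obtain ⟨w, hw⟩ := htu
    have h0 : q^u = (q^(2*t))^w := by rw [← pow_mul, ← hw]
    rw [h0]
    have h := Nat.sub_dvd_pow_sub_pow (q^(2*t)) 1 w
    simpa [two_mul, pow_add] using h
  have hcop : Nat.Coprime (q^t*q^t - 1) M := by
    have hqt1 : 1 ≤ q^t := Nat.one_le_pow _ _ (by omega)
    have h2' : Nat.gcd (q^t*q^t-1) M ∣ 2 := by
      have ha := (Nat.gcd_dvd_left (q^t*q^t-1) M).trans hdvd1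
      have hb := Nat.gcd_dvd_right (q^t*q^t-1) M
      have h3 : M - (q^u - 1) = 2 := by omega
      exact h3 ▸ Nat.dvd_sub hb ha
    have hbM := Nat.gcd_dvd_right (q^t*q^t-1) M
    rcases (Nat.dvd_prime Nat.prime_two).mp h2' with h | h
    · exact h
    · exact absurd (h ▸ hbM) hModd
  have hcopqM : Nat.Coprime M (q^(u+1)) := by
    apply Nat.Coprime.pow_right
    have h1 := (Nat.gcd_dvd_right M q).trans (dvd_pow_self q (by omega : u ≠ 0))
    have h2 := Nat.gcd_dvd_left M q
    have h3 : Nat.gcd M q ∣ 1 := by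
      have := Nat.dvd_sub h2 h1
      simpa [hM] using this
    exact Nat.dvd_one.mp h3
  -- the inverse of q^t*q^t-1 mod M
  set ζ : (ZMod M)ˣ := ZMod.unitOfCoprime _ hcop with hζ
  set c₀ : ZMod M := (↑(ζ⁻¹) : ZMod M) * (-(q:ZMod M)^(u+1)) with hc₀def
  have hζcoe : ((q^t*q^t - 1 : ℕ) : ZMod M) = (ζ : ZMod M) := (ZMod.coe_unitOfCoprime _ hcop).symm
  have key : ((q^t*q^t - 1 : ℕ) : ZMod M) * c₀ = -(q:ZMod M)^(u+1) := by
    rw [hc₀def, hζcoe, ← mul_assoc, Units.mul_inv, one_mul]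
  have hc0ne : c₀ ≠ 0 := by
    intro h
    have h1 : ((q^(u+1) : ℕ) : ZMod M) = 0 := by
      have hk := key
      rw [h, mul_zero] at hk
      have hk2 : (q:ZMod M)^(u+1) = 0 := by
        rw [← neg_eq_zero]; exact hk.symm
      push_cast
      exact hk2
    have h2 : M ∣ q^(u+1) := (ZMod.natCast_eq_zero_iff _ _).mp h1
    have := Nat.Coprime.eq_one_of_dvd hcopqM h2
    omega
  set c := c₀.val with hc
  have hclt : c < M := ZMod.val_lt c₀
  have hc1 : 1 ≤ c := by
    rcases Nat.eq_zero_or_pos c with h | h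
    · exact absurd ((ZMod.val_eq_zero c₀).mp h) hc0ne
    · exact h
  have hcc : ((c : ℕ) : ZMod M) = c₀ := by
    rw [hc, ZMod.natCast_val, ZMod.cast_id]
  clear_value c₀ c
  have hcq : c < q^(u+1) := by
    have h5 : q^u + q^u ≤ q^(u+1) := by
      rw [pow_succ]; nlinarith
    omega
  set N := q^(u+1) - c + (q^t*c) * q^t with hNdef
  have hqt1 : 1 ≤ q^t := Nat.one_le_pow _ _ (by omega)
  have hNdvd : M ∣ N := by
    apply (ZMod.natCast_eq_zero_iff _ _).mp
    have hcast : ((N : ℕ) : ZMod M)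
        = (q:ZMod M)^(u+1) - (c:ZMod M) + (q:ZMod M)^t * (c:ZMod M) * (q:ZMod M)^t := by
      rw [hNdef]
      push_cast [Nat.cast_sub hcq.le]
      ring
    rw [hcast]
    have hK : ((q^t*q^t - 1 : ℕ) : ZMod M) = (q:ZMod M)^t*(q:ZMod M)^t - 1 := by
      push_cast [Nat.cast_sub (show 1 ≤ q^t*q^t by nlinarith)]
      ring
    linear_combination key - c₀ * hK + ((q:ZMod M)^t*(q:ZMod M)^t - 1) * hcc
  have hN1 : 1 ≤ N := by
    have : 1 ≤ q^(u+1) - c := by omega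
    omega
  have hNe : N / M * M = N := Nat.div_mul_cancel hNdvd
  refine ⟨q^(u+1) - c, q^t * c, N/M, u+1+t,
    by omega, Nat.mul_pos (by positivity) (by omega), ?_, ?_, ?_⟩
  · rcases Nat.eq_zero_or_pos (N/M) with h | h
    · rw [h, zero_mul] at hNe; omega
    · exact h
  · have hb1 : c * q^t ≤ q^(u+1) * q^t := Nat.mul_le_mul_right _ (by omega)
    have hcomm : q^t * c = c * q^t := mul_comm _ _
    have h6 : (q^(u+1) - c) * q^t + q^t * c = q^(u+1) * q^t := by
      rw [Nat.sub_mul, hcomm]; omega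
    rw [h6, ← pow_add]
  · exact hNe.symm





lemma coeff0_X_pow (k : Type*) [Field k] (j : ℕ) (hj : 1 ≤ j) :
    ((X : k[X])^j).coeff 0 = 0 := by
  rw [coeff_X_pow]
  simp [Nat.ne_of_lt hj]

lemma mem_gen1 (k : Type*) [Field k] [CharP k 2] (q Q N v a b : ℕ)
    (hq1 : 1 ≤ q) (hQ2 : ∃ L, Q = 2^L) (ha : 1 ≤ a) (hb : 1 ≤ b)
    (hab : a*Q + b = q^v) (hN : a + b*Q = N) :
    (X : k[X]) - X^N ∈ TSpaceGen k {X + X^q, X^(Q+1)} := by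
  have h2' : (2 : k[X]) = 0 := by
    have : ((2:ℕ) : k[X]) = 0 := by
      rw [Nat.cast_ofNat]
      exact_mod_cast CharP.cast_eq_zero k[X] 2
    exact_mod_cast this
  refine Submodule.mem_sInf.mpr ?_
  rintro V ⟨⟨hV0, hVc⟩, hVS⟩
  have hA : (X : k[X]) + X^q ∈ V := hVS (Set.mem_insert _ _)
  have hC : (X : k[X])^(Q+1) ∈ V := hVS (Set.mem_insert_of_mem _ rfl)
  -- step 1 : X^j + X^(j*q) ∈ V
  have h1 : ∀ j, 1 ≤ j → (X : k[X])^j + X^(j*q) ∈ V := by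
    intro j hj
    have hcomp := hVc _ hA (X^j) (coeff0_X_pow k j hj)
    have e : ((X : k[X]) + X^q).comp (X^j) = X^j + X^(j*q) := by
      rw [add_comp, X_comp, pow_comp, X_comp, ← pow_mul]
    rwa [e] at hcomp
  -- step 2 : telescope
  have h2 : ∀ w, (X : k[X]) - X^(q^w) ∈ V := by
    intro w
    induction w with
    | zero => simpa using V.zero_mem
    | succ w ih =>
      have hs := h1 (q^w) (Nat.one_le_pow _ _ ?_)
      · have hsum := V.add_mem ih hs
        have e : ((X:k[X]) - X^(q^w)) + (X^(q^w) + X^(q^w*q)) = X - X^(q^(w+1)) := by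
          rw [pow_succ]
          linear_combination (X:k[X])^(q^w*q) * h2'
        rwa [e] at hsum
      · omega
  -- step 3 : X^(a*Q+b) + X^(a+b*Q) ∈ V
  have h3 : (X : k[X])^(a*Q+b) + X^(a+b*Q) ∈ V := by
    have c1 := hVc _ hC (X^a + X^b) (by
      rw [coeff_add, coeff0_X_pow k a ha, coeff0_X_pow k b hb, add_zero])
    have c2 := hVc _ hC (X^a) (coeff0_X_pow k a ha)
    have c3 := hVc _ hC (X^b) (coeff0_X_pow k b hb)
    have hmem := V.sub_mem (V.sub_mem c1 c2) c3
    have e : ((X:k[X])^(Q+1)).comp (X^a + X^b) - ((X:k[X])^(Q+1)).comp (X^a)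
        - ((X:k[X])^(Q+1)).comp (X^b) = X^(a*Q+b) + X^(a+b*Q) := by
      obtain ⟨L, rfl⟩ := hQ2
      simp only [pow_comp, X_comp]
      have hf : ((X:k[X])^a + X^b)^(2^L) = ((X:k[X])^a)^(2^L) + ((X:k[X])^b)^(2^L) :=
        add_pow_char_pow _ _ _ _
      rw [pow_succ, pow_succ, pow_succ, hf, ← pow_mul, ← pow_mul, pow_add, pow_add]
      ring
    rwa [e] at hmem
  -- conclude
  have hsum := V.add_mem (h2 v) h3
  have e : ((X:k[X]) - X^(q^v)) + (X^(a*Q+b) + X^(a+b*Q)) = X - X^N := by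
    rw [hab, ← hN]
    linear_combination (X:k[X])^(a+b*Q) * h2'
  rwa [e] at hsum

lemma mem_gen2 (k : Type*) [Field k] (q R e : ℕ) (he : 1 ≤ e) :
    (X : k[X])^(e*(R+1)) ∈ TSpaceGen k {X + X^q, X^(R+1)} := by
  refine Submodule.mem_sInf.mpr ?_
  rintro V ⟨⟨hV0, hVc⟩, hVS⟩
  have hC : (X : k[X])^(R+1) ∈ V := hVS (Set.mem_insert_of_mem _ rfl)
  have hcomp := hVc _ hC (X^e) (coeff0_X_pow k e he)
  have e' : ((X:k[X])^(R+1)).comp (X^e) = X^(e*(R+1)) := by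
    rw [pow_comp, X_comp, ← pow_mul]
  rwa [e'] at hcomp

lemma aux_main (k : Type*) [Field k] [Fintype k] (q : ℕ)
    (hq : Fintype.card k = q) (h2 : ringChar k = 2) (n m : ℕ) (hnm : n < m) :
    Polynomial.X ∈
      TSpaceGen k {Polynomial.X + Polynomial.X ^ q,
          Polynomial.X ^ (q ^ (q ^ n) + 1)} ⊔
        TSpaceGen k {Polynomial.X + Polynomial.X ^ q,
          Polynomial.X ^ (q ^ (q ^ m) + 1)} := by
  haveI hch : CharP k 2 := by rw [← h2]; exact ringChar.charP k
  obtain ⟨s, hp, hcard⟩ := FiniteField.card k 2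
  have hq2 : q = 2^(s:ℕ) := by rw [← hq, hcard]
  have hs1 : 1 ≤ (s:ℕ) := s.2
  have hqge : 2 ≤ q := by
    rw [hq2]
    calc 2 = 2^1 := (pow_one 2).symm
    _ ≤ 2^(s:ℕ) := Nat.pow_le_pow_right (by omega) hs1
  have hqe : 2 ∣ q := by
    rw [hq2]; exact dvd_pow_self 2 (by omega)
  have ht1 : 1 ≤ q^n := Nat.one_le_pow _ _ (by omega)
  have hu1 : 1 ≤ q^m := Nat.one_le_pow _ _ (by omega)
  have htu : 2*(q^n) ∣ q^m := by
    have hm : q^m = q^n * q^(m-n) := by rw [← pow_add]; congr 1; omega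
    rw [hm, mul_comm 2 (q^n)]
    exact mul_dvd_mul_left _ (hqe.trans (dvd_pow_self q (by omega)))
  obtain ⟨a, b, e, v, ha, hb, he, hab, hN⟩ :=
    arith_aux q (q^n) (q^m) hqge hqe ht1 hu1 htu
  have m1 := mem_gen1 k q (q^(q^n)) (e*(q^(q^m)+1)) v a b (by omega)
    ⟨(s:ℕ)*(q^n), by rw [hq2, ← pow_mul]⟩ ha hb hab hN
  have m2 := mem_gen2 k q (q^(q^m)) e he
  have hfin := Submodule.add_mem_sup m1 m2
  rwa [sub_add_cancel] at hfin

/-- For a finite field `k` with `q` elements of characteristic 2, with `W_t` the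
T-space of `k[x]₀` generated by `{x + x^q, x^(qᵗ+1)}`, one has
`W_(qⁿ) + W_(qᵐ) = k[x]₀` for `n ≠ m`, i.e. `x ∈ W_(qⁿ) + W_(qᵐ)`. -/
theorem Wqn_sup_Wqm (k : Type*) [Field k] [Fintype k] (q : ℕ)
    (hq : Fintype.card k = q) (h2 : ringChar k = 2) (n m : ℕ) (hnm : n ≠ m) :
    Polynomial.X ∈
      TSpaceGen k {Polynomial.X + Polynomial.X ^ q,
          Polynomial.X ^ (q ^ (q ^ n) + 1)} ⊔
        TSpaceGen k {Polynomial.X + Polynomial.X ^ q,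
          Polynomial.X ^ (q ^ (q ^ m) + 1)} := by
  rcases hnm.lt_or_gt with h | h
  · exact aux_main k q hq h2 n m h
  · rw [sup_comm]
    exact aux_main k q hq h2 m n h
end

section
/- Let k be the field with 2 elements, and let W_1 denote the T-space of k[x]_0 generated by {x + x², x³}. Then W_1 is a maximal T-space of k[x]_0: W_1 is proper (x ∉ W_1), and every T-space of k[x]_0 that properly contains W_1 contains x. -/
namespace W1Aux

open Polynomial

noncomputable section

abbrev F4 := GaloisField 2 2

lemma two_eq_zero_F4 : (2 : F4) = 0 := by
  have := CharP.cast_eq_zero F4 2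
  exact_mod_cast this

lemma two_eq_zero_P : (2 : Polynomial (ZMod 2)) = 0 := by
  have := CharP.cast_eq_zero (Polynomial (ZMod 2)) 2
  exact_mod_cast this

lemma pow_four (a : F4) : a ^ 4 = a := by
  letI : Fintype F4 := Fintype.ofFinite _
  have h := FiniteField.pow_card a
  have hc : Fintype.card F4 = 4 := by
    rw [← Nat.card_eq_fintype_card, GaloisField.card 2 2 (by norm_num)]; norm_num
  rwa [hc] at h

lemma exists_ne01 : ∃ t : F4, t ≠ 0 ∧ t ≠ 1 := by
  letI : Fintype F4 := Fintype.ofFinite _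
  letI := Classical.decEq F4
  have hc : Fintype.card F4 = 4 := by
    rw [← Nat.card_eq_fintype_card, GaloisField.card 2 2 (by norm_num)]; norm_num
  by_contra h
  push_neg at h
  have hsub : (Finset.univ : Finset F4) ⊆ {0, 1} := by
    intro t _
    rcases Classical.em (t = 0) with h0 | h0
    · simp [h0]
    · simp [h t h0]
  have hle := Finset.card_le_card hsub
  rw [Finset.card_univ, hc] at hle
  have : (4 : ℕ) ≤ 2 := hle.trans (Finset.card_insert_le _ _ |>.trans (by simp))
  omega

lemma exists_omega : ∃ w : F4, w ^ 2 + w + 1 = 0 := by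
  obtain ⟨t, h0, h1⟩ := exists_ne01
  have h4 := pow_four t
  have h2 := two_eq_zero_F4
  have hfac : t * ((t + 1) * (t ^ 2 + t + 1)) = 0 := by
    linear_combination h4 + (t ^ 3 + t ^ 2 + t) * h2
  rcases mul_eq_zero.mp hfac with h | h
  · exact absurd h h0
  rcases mul_eq_zero.mp h with h | h
  · exact absurd (by linear_combination h - h2 : t = 1) h1
  · exact ⟨t, h⟩

lemma aeval_sq (t : F4) (p : Polynomial (ZMod 2)) :
    (aeval t p) ^ 2 = aeval (t ^ 2) p := by
  have hc : ∀ c : ZMod 2, c ^ 2 = c := by decide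
  induction p using Polynomial.induction_on' with
  | add p q hp hq =>
    rw [map_add, map_add, add_pow_char, hp, hq]
  | monomial n c =>
    rw [aeval_monomial, aeval_monomial, mul_pow, ← map_pow, hc c, ← pow_mul, ← pow_mul,
      Nat.mul_comm]

lemma trichotomy (w : F4) (hw : w ^ 2 + w + 1 = 0) (t : F4) :
    t = w ∨ t = w ^ 2 ∨ t ^ 2 = t := by
  have h4 := pow_four t
  have h2 := two_eq_zero_F4
  have hfac : (t ^ 2 + t) * (t ^ 2 + t + 1) = 0 := by
    linear_combination h4 + (t ^ 3 + t ^ 2 + t) * h2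
  rcases mul_eq_zero.mp hfac with h | h
  · refine Or.inr (Or.inr ?_)
    linear_combination h - t * h2
  · have hfac2 : (t - w) * (t - w ^ 2) = 0 := by
      linear_combination h + (w - t - 1) * hw
    rcases mul_eq_zero.mp hfac2 with h' | h'
    · exact Or.inl (by linear_combination h')
    · exact Or.inr (Or.inl (by linear_combination h'))

/-- The codimension-one T-space `{p | p(0) = 0, Tr(p(ω)) = 0}`. -/
def V0 (w : F4) : Submodule (ZMod 2) (Polynomial (ZMod 2)) where
  carrier := {p | p.coeff 0 = 0 ∧ aeval w p + (aeval w p) ^ 2 = 0}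
  zero_mem' := by simp
  add_mem' := by
    rintro p q ⟨hp0, hp⟩ ⟨hq0, hq⟩
    refine ⟨by simp [coeff_add, hp0, hq0], ?_⟩
    rw [map_add]
    linear_combination hp + hq + (aeval w p * aeval w q) * two_eq_zero_F4
  smul_mem' := by
    intro c p hp
    have hc : c = 0 ∨ c = 1 := by revert c; decide
    rcases hc with rfl | rfl
    · simp
    · simpa using hp

lemma mem_V0 {w : F4} {p : Polynomial (ZMod 2)} :
    p ∈ V0 w ↔ p.coeff 0 = 0 ∧ aeval w p + (aeval w p) ^ 2 = 0 := Iff.rfl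

lemma isTSpace_V0 (w : F4) (hw : w ^ 2 + w + 1 = 0) : IsTSpace (ZMod 2) (V0 w) := by
  constructor
  · rintro p ⟨h0, _⟩; exact h0
  · rintro p ⟨h0, hψ⟩ g hg
    refine ⟨?_, ?_⟩
    · have hg0 : eval 0 g = 0 := by rw [← coeff_zero_eq_eval_zero]; exact hg
      rw [coeff_zero_eq_eval_zero, eval_comp, hg0, ← coeff_zero_eq_eval_zero]
      exact h0
    · rw [aeval_comp]
      rcases trichotomy w hw (aeval w g) with h | h | h
      · rw [h]; exact hψ
      · rw [h, ← aeval_sq]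
        linear_combination (aeval w p + (aeval w p) ^ 2) * hψ -
          (aeval w p) ^ 3 * two_eq_zero_F4
      · have hsq := aeval_sq (aeval w g) p
        rw [h] at hsq
        linear_combination hsq + (aeval (aeval w g) p) * two_eq_zero_F4

lemma gens_sub_V0 (w : F4) (hw : w ^ 2 + w + 1 = 0) :
    ({X + X ^ 2, X ^ 3} : Set (Polynomial (ZMod 2))) ⊆ (V0 w : Set (Polynomial (ZMod 2))) := by
  intro p hp
  rcases hp with rfl | rfl
  · refine ⟨by simp, ?_⟩
    simp only [map_add, map_pow, aeval_X]
    linear_combination (w ^ 2 + w) * hw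
  · refine ⟨by simp [coeff_X_pow], ?_⟩
    simp only [map_pow, aeval_X]
    linear_combination (w ^ 4 - w ^ 3) * hw + w ^ 3 * two_eq_zero_F4

/-- The T-space `W₁`. -/
abbrev W : Submodule (ZMod 2) (Polynomial (ZMod 2)) :=
  TSpaceGen (ZMod 2) {X + X ^ 2, X ^ 3}

lemma mem_W {p : Polynomial (ZMod 2)} :
    p ∈ W ↔ ∀ V : Submodule (ZMod 2) (Polynomial (ZMod 2)), IsTSpace (ZMod 2) V →
      ({X + X ^ 2, X ^ 3} : Set (Polynomial (ZMod 2))) ⊆ ↑V → p ∈ V := by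
  constructor
  · intro h V h1 h2
    exact Submodule.mem_sInf.mp h V ⟨h1, h2⟩
  · intro h
    exact Submodule.mem_sInf.mpr fun V hV => h V hV.1 hV.2

lemma gen1_mem : (X + X ^ 2 : Polynomial (ZMod 2)) ∈ W :=
  mem_W.mpr fun _ _ hS => hS (by simp)

lemma gen2_mem : (X ^ 3 : Polynomial (ZMod 2)) ∈ W :=
  mem_W.mpr fun _ _ hS => hS (by simp)

lemma comp_mem {p g : Polynomial (ZMod 2)} (hp : p ∈ W) (hg : g.coeff 0 = 0) :
    p.comp g ∈ W :=
  mem_W.mpr fun V h1 h2 => h1.2 p (mem_W.mp hp V h1 h2) g hg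

/-- The full algebra `k[x]₀` as a T-space. -/
def Vall : Submodule (ZMod 2) (Polynomial (ZMod 2)) where
  carrier := {p | p.coeff 0 = 0}
  zero_mem' := by simp
  add_mem' := by
    intro a b ha hb
    simp only [Set.mem_setOf_eq, coeff_add] at *
    rw [ha, hb, add_zero]
  smul_mem' := by
    intro c p hp
    simp only [Set.mem_setOf_eq, coeff_smul] at *
    rw [hp, smul_zero]

lemma isTSpace_Vall : IsTSpace (ZMod 2) Vall := by
  constructor
  · intro p hp; exact hp
  · intro p hp g hg
    have hg0 : eval 0 g = 0 := by rw [← coeff_zero_eq_eval_zero]; exact hg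
    show (p.comp g).coeff 0 = 0
    rw [coeff_zero_eq_eval_zero, eval_comp, hg0, ← coeff_zero_eq_eval_zero]
    exact hp

lemma W_coeff0 {p : Polynomial (ZMod 2)} (hp : p ∈ W) : p.coeff 0 = 0 := by
  refine mem_W.mp hp Vall isTSpace_Vall ?_
  intro q hq
  rcases hq with rfl | rfl
  · show (X + X ^ 2 : Polynomial (ZMod 2)).coeff 0 = 0; simp
  · show (X ^ 3 : Polynomial (ZMod 2)).coeff 0 = 0; simp [coeff_X_pow]

lemma isTSpace_W : IsTSpace (ZMod 2) W :=
  ⟨fun _ hp => W_coeff0 hp, fun p hp g hg => comp_mem hp hg⟩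

lemma coeff0_Xpow (n : ℕ) (hn : n ≠ 0) : ((X : Polynomial (ZMod 2)) ^ n).coeff 0 = 0 := by
  rw [coeff_X_pow]
  simp [Ne.symm hn]

lemma pow3_mem (n : ℕ) (hn : n ≠ 0) : (X : Polynomial (ZMod 2)) ^ (3 * n) ∈ W := by
  have h := comp_mem gen2_mem (coeff0_Xpow n hn)
  rwa [pow_comp, X_comp, ← pow_mul, Nat.mul_comm n 3] at h

lemma E1 (n : ℕ) (hn : n ≠ 0) : (X : Polynomial (ZMod 2)) ^ n + X ^ (2 * n) ∈ W := by
  have h := comp_mem gen1_mem (coeff0_Xpow n hn)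
  rwa [add_comp, X_comp, pow_comp, X_comp, ← pow_mul, Nat.mul_comm n 2] at h

lemma cube_exp (a b : ℕ) :
    ((X : Polynomial (ZMod 2)) ^ a + X ^ b) ^ 3 =
      X ^ (3 * a) + X ^ (2 * a + b) + X ^ (a + 2 * b) + X ^ (3 * b) := by
  have h2 : ((X : Polynomial (ZMod 2)) ^ a + X ^ b) ^ 2 = X ^ (2 * a) + X ^ (2 * b) := by
    rw [add_pow_char]
    ring
  calc ((X : Polynomial (ZMod 2)) ^ a + X ^ b) ^ 3
      = ((X : Polynomial (ZMod 2)) ^ a + X ^ b) ^ 2 * (X ^ a + X ^ b) := by ring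
    _ = _ := by rw [h2]; ring

lemma E2 (a b : ℕ) (ha : a ≠ 0) (hb : b ≠ 0) :
    (X : Polynomial (ZMod 2)) ^ (a + 2 * b) + X ^ (2 * a + b) ∈ W := by
  have hg : ((X : Polynomial (ZMod 2)) ^ a + X ^ b).coeff 0 = 0 := by
    rw [coeff_add, coeff0_Xpow a ha, coeff0_Xpow b hb, add_zero]
  have h3 := comp_mem gen2_mem hg
  rw [pow_comp, X_comp, cube_exp] at h3
  have hmem := Submodule.sub_mem _ (Submodule.sub_mem _ h3 (pow3_mem a ha)) (pow3_mem b hb)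
  have heq : (X : Polynomial (ZMod 2)) ^ (a + 2 * b) + X ^ (2 * a + b) =
      (X ^ (3 * a) + X ^ (2 * a + b) + X ^ (a + 2 * b) + X ^ (3 * b)) - X ^ (3 * a)
        - X ^ (3 * b) := by ring
  rw [heq]; exact hmem

lemma key : ∀ n : ℕ, ¬ (3 ∣ n) → (X : Polynomial (ZMod 2)) ^ n + X ∈ W := by
  intro n
  induction n using Nat.strong_induction_on with
  | _ n ih =>
    intro h3
    rcases Nat.even_or_odd n with ⟨m, hm⟩ | ⟨b, hb⟩
    · -- even case : n = m + m
      subst hm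
      have hm0 : m ≠ 0 := by rintro rfl; exact h3 ⟨0, rfl⟩
      have h3m : ¬ (3 ∣ m) := by rintro ⟨c, rfl⟩; exact h3 ⟨2 * c, by ring⟩
      have h1 := E1 m hm0
      have h2 := ih m (by omega) h3m
      have heq : (X : Polynomial (ZMod 2)) ^ (m + m) + X =
          (X ^ m + X ^ (2 * m)) + (X ^ m + X) := by
        have h2m : 2 * m = m + m := by ring
        rw [h2m]
        linear_combination (-(X : Polynomial (ZMod 2)) ^ m) * two_eq_zero_P
      rw [heq]; exact add_mem h1 h2
    · -- odd case : n = 2 * b + 1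
      subst hb
      rcases Nat.lt_or_ge b 2 with hb2 | hb2
      · interval_cases b
        · -- n = 1
          have heq : (X : Polynomial (ZMod 2)) ^ (2 * 0 + 1) + X = 0 := by
            linear_combination (X : Polynomial (ZMod 2)) * two_eq_zero_P
          rw [heq]; exact zero_mem _
        · -- n = 3
          exact absurd ⟨1, by ring⟩ h3
      · have hE2 := E2 1 b one_ne_zero (by omega)
        have h3m : ¬ (3 ∣ (b + 2)) := by
          rintro ⟨c, hc⟩
          exact h3 ⟨2 * c - 1, by omega⟩
        have hIH := ih (b + 2) (by omega) h3m
        have heq : (X : Polynomial (ZMod 2)) ^ (2 * b + 1) + X =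
            (X ^ (1 + 2 * b) + X ^ (2 * 1 + b)) + (X ^ (b + 2) + X) := by
          have e1 : 1 + 2 * b = 2 * b + 1 := by ring
          have e2 : 2 * 1 + b = b + 2 := by ring
          rw [e1, e2]
          linear_combination (-(X : Polynomial (ZMod 2)) ^ (b + 2)) * two_eq_zero_P
        rw [heq]; exact add_mem hE2 hIH

/-- The submodule `{p | p ∈ W ∨ p + X ∈ W}`. -/
def Dsub : Submodule (ZMod 2) (Polynomial (ZMod 2)) where
  carrier := {p | p ∈ W ∨ p + X ∈ W}
  zero_mem' := Or.inl (zero_mem _)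
  add_mem' := by
    rintro p q (hp | hp) (hq | hq)
    · exact Or.inl (add_mem hp hq)
    · refine Or.inr ?_
      have h := add_mem hp hq
      rwa [← add_assoc] at h
    · refine Or.inr ?_
      have h := add_mem hp hq
      have heq : p + q + X = p + X + q := by ring
      rwa [heq]
    · refine Or.inl ?_
      have h := add_mem hp hq
      have heq : p + q = (p + X) + (q + X) := by
        linear_combination (-(X : Polynomial (ZMod 2))) * two_eq_zero_P
      rwa [← heq] at h
  smul_mem' := by
    intro c p hp
    have hc : c = 0 ∨ c = 1 := by revert c; decide
    rcases hc with rfl | rfl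
    · simp only [zero_smul]
      exact Or.inl (zero_mem _)
    · simpa using hp

lemma dichotomy (p : Polynomial (ZMod 2)) (h0 : p.coeff 0 = 0) :
    p ∈ W ∨ p + X ∈ W := by
  have hsum : ∑ i ∈ p.support, C (p.coeff i) * X ^ i ∈ Dsub := by
    refine Submodule.sum_mem _ fun i hi => ?_
    have hi0 : i ≠ 0 := by
      rintro rfl
      exact (Polynomial.mem_support_iff.mp hi) h0
    have hc : p.coeff i = 0 ∨ p.coeff i = 1 := by
      revert h0; revert hi
      rcases (by decide : ∀ c : ZMod 2, c = 0 ∨ c = 1) (p.coeff i) with h | h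
      · intro _ _; exact Or.inl h
      · intro _ _; exact Or.inr h
    rcases hc with h | h
    · rw [h]
      simp only [map_zero, zero_mul]
      exact zero_mem _
    · rw [h]
      simp only [map_one, one_mul]
      show (X : Polynomial (ZMod 2)) ^ i ∈ W ∨ (X : Polynomial (ZMod 2)) ^ i + X ∈ W
      rcases Classical.em (3 ∣ i) with ⟨m, rfl⟩ | hnd
      · have hm : m ≠ 0 := by rintro rfl; omega
        exact Or.inl (pow3_mem m hm)
      · exact Or.inr (key i hnd)
  have hp : p ∈ Dsub := by
    rw [p.as_sum_support_C_mul_X_pow]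
    exact hsum
  exact hp

lemma X_not_mem_W : (X : Polynomial (ZMod 2)) ∉ W := by
  obtain ⟨w, hw⟩ := exists_omega
  intro hX
  have hV := mem_W.mp hX (V0 w) (isTSpace_V0 w hw) (gens_sub_V0 w hw)
  obtain ⟨_, hψ⟩ := hV
  rw [aeval_X] at hψ
  have h1 : (1 : F4) = 0 := by linear_combination hw - hψ
  exact one_ne_zero h1

end

end W1Aux

/-- Over the field with 2 elements, the T-space `W₁` generated by `{x + x², x³}` is a
maximal T-space of `k[x]₀`. -/
theorem W1_isMaximal :
    IsTSpace (ZMod 2) (TSpaceGen (ZMod 2) {Polynomial.X + Polynomial.X ^ 2, Polynomial.X ^ 3}) ∧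
      Polynomial.X ∉
        TSpaceGen (ZMod 2) {Polynomial.X + Polynomial.X ^ 2, Polynomial.X ^ 3} ∧
      ∀ U : Submodule (ZMod 2) (Polynomial (ZMod 2)), IsTSpace (ZMod 2) U →
        TSpaceGen (ZMod 2) {Polynomial.X + Polynomial.X ^ 2, Polynomial.X ^ 3} < U →
        Polynomial.X ∈ U := by
  refine ⟨W1Aux.isTSpace_W, W1Aux.X_not_mem_W, ?_⟩
  intro U hU hlt
  obtain ⟨p, hpU, hpW⟩ := SetLike.exists_of_lt hlt
  have h0 := hU.1 p hpU
  rcases W1Aux.dichotomy p h0 with h | h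
  · exact absurd h hpW
  · have hx : (Polynomial.X : Polynomial (ZMod 2)) = (p + Polynomial.X) - p := by ring
    rw [hx]
    exact Submodule.sub_mem U (hlt.le h) hpU
end

section
/- Let k be the field with 2 elements, and let W_2 denote the T-space of k[x]_0 generated by {x + x², x⁵}. Then W_2 is a maximal T-space of k[x]_0 (W_2 is proper and every T-space properly containing W_2 contains x), and moreover x⁷ ∉ W_2. -/
namespace W2Aux

open Polynomial

/-- `x + x = 0` in `(ZMod 2)[X]`. -/
lemma pp (x : Polynomial (ZMod 2)) : x + x = 0 := CharTwo.add_self_eq_zero x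

lemma pow4_add (a b : Polynomial (ZMod 2)) : (a + b) ^ 4 = a ^ 4 + b ^ 4 := by
  rw [show (4 : ℕ) = 2 * 2 from rfl, pow_mul, CharTwo.add_sq, CharTwo.add_sq,
    ← pow_mul, ← pow_mul]

lemma pow5_add (a b : Polynomial (ZMod 2)) :
    (a + b) ^ 5 = a ^ 5 + a ^ 4 * b + b ^ 4 * a + b ^ 5 := by
  have h : (a + b) ^ 5 = (a + b) ^ 4 * (a + b) := by ring
  rw [h, pow4_add]; ring

/-- The residue classification function: indicator of units mod 15. -/
def cc (n : ℕ) : ZMod 2 := if n % 15 ∈ ({1, 2, 4, 8, 7, 11, 13, 14} : Finset ℕ) then 1 else 0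

lemma cc_eq (m n : ℕ) (h : m % 15 = n % 15) : cc m = cc n := by unfold cc; rw [h]

lemma cc_two (n : ℕ) : cc (2 * n) = cc n := by
  have h : (2 * n) % 15 = (2 * (n % 15)) % 15 := by omega
  unfold cc
  rw [h]
  have h15 : n % 15 < 15 := by omega
  generalize n % 15 = r at h15 ⊢
  interval_cases r <;> decide

lemma cc_four (n : ℕ) : cc (4 * n) = cc n := by
  rw [show 4 * n = 2 * (2 * n) by ring, cc_two, cc_two]

lemma cc_sym (i j : ℕ) : cc (4 * i + j) = cc (4 * j + i) := by
  have h : cc (4 * j + i) = cc (4 * (4 * i + j)) :=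
    cc_eq _ _ (by omega)
  rw [h, cc_four]

lemma cc_five (n : ℕ) : cc (5 * n) = 0 := by
  unfold cc
  have h : (5 * n) % 15 = 5 * (n % 3) := by omega
  rw [h]
  have h3 : n % 3 < 3 := by omega
  generalize n % 3 = r at h3 ⊢
  interval_cases r <;> decide

/-- The separating linear functional. -/
def phi (p : Polynomial (ZMod 2)) : ZMod 2 := p.sum fun n a => cc n * a

lemma phi_zero : phi 0 = 0 := sum_zero_index _

lemma phi_add (p q : Polynomial (ZMod 2)) : phi (p + q) = phi p + phi q :=
  sum_add_index p q _ (fun n => by ring) (fun n a b => by ring)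

lemma phi_monomial (n : ℕ) (a : ZMod 2) : phi (monomial n a) = cc n * a :=
  sum_monomial_index a _ (by ring)

lemma zmod2_sq (a : ZMod 2) : a ^ 2 = a := by revert a; decide
lemma zmod2_pow4 (a : ZMod 2) : a ^ 4 = a := by revert a; decide
lemma zmod2_pow5 (a : ZMod 2) : a ^ 5 = a := by revert a; decide

lemma phi_sq (p : Polynomial (ZMod 2)) : phi (p ^ 2) = phi p := by
  induction p using Polynomial.induction_on' with
  | add p q hp hq => rw [CharTwo.add_sq, phi_add, phi_add, hp, hq]
  | monomial n a =>
      rw [monomial_pow, phi_monomial, phi_monomial, zmod2_sq, show n * 2 = 2 * n by ring, cc_two]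

lemma phi_sym (p q : Polynomial (ZMod 2)) : phi (p ^ 4 * q) = phi (q ^ 4 * p) := by
  induction p using Polynomial.induction_on' with
  | add p₁ p₂ h1 h2 =>
      rw [pow4_add, add_mul, mul_add, phi_add, phi_add, h1, h2]
  | monomial n a =>
      induction q using Polynomial.induction_on' with
      | add q₁ q₂ g1 g2 =>
          rw [pow4_add, add_mul, mul_add, phi_add, phi_add, g1, g2]
      | monomial k b =>
          rw [monomial_pow, monomial_pow, monomial_mul_monomial, monomial_mul_monomial,
            phi_monomial, phi_monomial, zmod2_pow4, zmod2_pow4]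
          rw [cc_eq (n * 4 + k) (4 * n + k) (by omega), cc_eq (k * 4 + n) (4 * k + n) (by omega),
            cc_sym]
          ring

lemma phi_pow5 (p : Polynomial (ZMod 2)) : phi (p ^ 5) = 0 := by
  induction p using Polynomial.induction_on' with
  | add p q hp hq =>
      rw [pow5_add, phi_add, phi_add, phi_add, hp, hq, phi_sym]
      simp [CharTwo.add_self_eq_zero]
  | monomial n a =>
      rw [monomial_pow, phi_monomial, cc_eq (n * 5) (5 * n) (by omega), cc_five, zero_mul]


lemma comp_coeff_zero {p g : Polynomial (ZMod 2)} (hp : p.coeff 0 = 0) (hg : g.coeff 0 = 0) :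
    (p.comp g).coeff 0 = 0 := by
  rw [coeff_zero_eq_eval_zero] at hp hg ⊢
  rw [eval_comp, hg, hp]

lemma zmod2_cases (a : ZMod 2) : a = 0 ∨ a = 1 := by revert a; decide

/-- The separating T-space: kernel of `phi` under all substitutions. -/
noncomputable def V2 : Submodule (ZMod 2) (Polynomial (ZMod 2)) where
  carrier := {p | p.coeff 0 = 0 ∧
    ∀ g : Polynomial (ZMod 2), g.coeff 0 = 0 → phi (p.comp g) = 0}
  add_mem' := by
    rintro p q ⟨hp0, hp⟩ ⟨hq0, hq⟩
    refine ⟨by simp [hp0, hq0], fun g hg => ?_⟩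
    rw [add_comp, phi_add, hp g hg, hq g hg, add_zero]
  zero_mem' := ⟨by simp, fun g hg => by simp [phi_zero]⟩
  smul_mem' := by
    intro c p hp
    rcases zmod2_cases c with h | h <;> subst h
    · rw [zero_smul]
      exact ⟨by simp, fun g hg => by simp [phi_zero]⟩
    · rw [one_smul]
      exact hp

lemma V2_tspace : IsTSpace (ZMod 2) V2 := by
  constructor
  · exact fun p hp => hp.1
  · rintro p ⟨hp0, hp⟩ g hg
    exact ⟨comp_coeff_zero hp0 hg, fun h hh => by
      rw [comp_assoc]
      exact hp (g.comp h) (comp_coeff_zero hg hh)⟩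

lemma phi_X : phi X = 1 := by
  rw [← monomial_one_one_eq_X, phi_monomial]; decide

lemma phi_X7 : phi (X ^ 7) = 1 := by
  rw [X_pow_eq_monomial, phi_monomial]; decide

lemma V2_gens : {X + X ^ 2, X ^ 5} ⊆ (V2 : Set (Polynomial (ZMod 2))) := by
  rintro p (rfl | rfl)
  · refine ⟨by simp, fun g hg => ?_⟩
    rw [add_comp, X_comp, pow_comp, X_comp, phi_add, phi_sq, CharTwo.add_self_eq_zero]
  · refine ⟨by simp, fun g hg => ?_⟩
    rw [pow_comp, X_comp, phi_pow5]

noncomputable abbrev W2 : Submodule (ZMod 2) (Polynomial (ZMod 2)) :=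
  TSpaceGen (ZMod 2) {X + X ^ 2, X ^ 5}

lemma mem_W2_iff (p : Polynomial (ZMod 2)) :
    p ∈ W2 ↔ ∀ V ∈ {V : Submodule (ZMod 2) (Polynomial (ZMod 2)) |
      IsTSpace (ZMod 2) V ∧ ({X + X ^ 2, X ^ 5} : Set (Polynomial (ZMod 2))) ⊆ V}, p ∈ V :=
  Submodule.mem_sInf

lemma W2_le_V2 : W2 ≤ V2 := sInf_le ⟨V2_tspace, V2_gens⟩

lemma X_not_mem_W2 : X ∉ W2 := by
  intro h
  have h2 := (W2_le_V2 h).2 X (by simp)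
  rw [X_comp, phi_X] at h2
  exact one_ne_zero h2

lemma X7_not_mem_W2 : X ^ 7 ∉ W2 := by
  intro h
  have h2 := (W2_le_V2 h).2 X (by simp)
  rw [comp_X, phi_X7] at h2
  exact one_ne_zero h2

lemma W2_tspace : IsTSpace (ZMod 2) W2 := by
  constructor
  · exact fun p hp => (W2_le_V2 hp).1
  · intro p hp g hg
    rw [mem_W2_iff] at hp ⊢
    exact fun V hV => hV.1.2 p (hp V hV) g hg

lemma memX2 : X + X ^ 2 ∈ W2 := by
  rw [mem_W2_iff]; exact fun V hV => hV.2 (by simp)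

lemma memX5 : X ^ 5 ∈ W2 := by
  rw [mem_W2_iff]; exact fun V hV => hV.2 (by simp)

lemma hE (g : Polynomial (ZMod 2)) (hg : g.coeff 0 = 0) : g + g ^ 2 ∈ W2 := by
  have h := W2_tspace.2 _ memX2 g hg
  rwa [add_comp, X_comp, pow_comp, X_comp] at h

lemma h5 (g : Polynomial (ZMod 2)) (hg : g.coeff 0 = 0) : g ^ 5 ∈ W2 := by
  have h := W2_tspace.2 _ memX5 g hg
  rwa [pow_comp, X_comp] at h

lemma hA (m k : ℕ) (hm : 1 ≤ m) (hk : k = 2 * m) : X ^ m + X ^ k ∈ W2 := by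
  have h := hE (X ^ m) (by rw [coeff_X_pow, if_neg (by omega)])
  rwa [← pow_mul, show m * 2 = k by omega] at h

lemma hB (m k : ℕ) (hm : 1 ≤ m) (hk : k = 5 * m) : (X : Polynomial (ZMod 2)) ^ k ∈ W2 := by
  have h := h5 (X ^ m) (by rw [coeff_X_pow, if_neg (by omega)])
  rwa [← pow_mul, show m * 5 = k by omega] at h

lemma hC (i j m₁ m₂ : ℕ) (hi : 1 ≤ i) (hj : 1 ≤ j) (h1 : m₁ = 4 * i + j)
    (h2 : m₂ = 4 * j + i) : (X : Polynomial (ZMod 2)) ^ m₁ + X ^ m₂ ∈ W2 := by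
  have hg : ((X : Polynomial (ZMod 2)) ^ i + X ^ j) ^ 5 ∈ W2 :=
    h5 _ (by rw [coeff_add, coeff_X_pow, coeff_X_pow, if_neg (by omega), if_neg (by omega),
      add_zero])
  have hmem := Submodule.add_mem _ (Submodule.add_mem _ hg (hB i (5 * i) hi rfl))
    (hB j (5 * j) hj rfl)
  have heq : ((X : Polynomial (ZMod 2)) ^ i + X ^ j) ^ 5 + X ^ (5 * i) + X ^ (5 * j)
      = X ^ m₁ + X ^ m₂ := by
    subst h1 h2
    linear_combination pp ((X : Polynomial (ZMod 2)) ^ (5 * i)) +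
      pp ((X : Polynomial (ZMod 2)) ^ (5 * j)) +
      (2 : Polynomial (ZMod 2)) * pp (X ^ (4 * i + j)) +
      (5 : Polynomial (ZMod 2)) * pp (X ^ (3 * i + 2 * j)) +
      (5 : Polynomial (ZMod 2)) * pp (X ^ (2 * i + 3 * j)) +
      (2 : Polynomial (ZMod 2)) * pp (X ^ (i + 4 * j))
  rwa [heq] at hmem


/-- `p` reduces, modulo `W2`, to an element of the span of `X, X³, X⁷`. -/
def Good (p : Polynomial (ZMod 2)) : Prop :=
  ∃ α β γ : ZMod 2, p + (C α * X + C β * X ^ 3 + C γ * X ^ 7) ∈ W2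

lemma good_shift (p q : Polynomial (ZMod 2)) (h : p + q ∈ W2) (hq : Good q) : Good p := by
  obtain ⟨α, β, γ, hm⟩ := hq
  refine ⟨α, β, γ, ?_⟩
  have h2 := Submodule.add_mem _ h hm
  have heq : p + q + (q + (C α * X + C β * X ^ 3 + C γ * X ^ 7))
      = p + (C α * X + C β * X ^ 3 + C γ * X ^ 7) := by
    linear_combination pp q
  rwa [heq] at h2

lemma good_zero : Good 0 := ⟨0, 0, 0, by simp⟩

lemma good_add (p q : Polynomial (ZMod 2)) (hp : Good p) (hq : Good q) : Good (p + q) := by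
  obtain ⟨α, β, γ, hm⟩ := hp
  obtain ⟨α', β', γ', hm'⟩ := hq
  refine ⟨α + α', β + β', γ + γ', ?_⟩
  have h2 := Submodule.add_mem _ hm hm'
  have heq : p + (C α * X + C β * X ^ 3 + C γ * X ^ 7) +
      (q + (C α' * X + C β' * X ^ 3 + C γ' * X ^ 7)) =
      p + q + (C (α + α') * X + C (β + β') * X ^ 3 + C (γ + γ') * X ^ 7) := by
    rw [C_add, C_add, C_add]; ring
  rwa [heq] at h2

lemma good_X : Good X := by
  refine ⟨1, 0, 0, ?_⟩
  have : (X : Polynomial (ZMod 2)) + (C 1 * X + C 0 * X ^ 3 + C 0 * X ^ 7) = 0 := by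
    rw [C_1, C_0]; ring_nf; linear_combination pp (X : Polynomial (ZMod 2))
  rw [this]; exact Submodule.zero_mem _

lemma good_X3 : Good (X ^ 3) := by
  refine ⟨0, 1, 0, ?_⟩
  have : (X : Polynomial (ZMod 2)) ^ 3 + (C 0 * X + C 1 * X ^ 3 + C 0 * X ^ 7) = 0 := by
    rw [C_1, C_0]; ring_nf; linear_combination pp ((X : Polynomial (ZMod 2)) ^ 3)
  rw [this]; exact Submodule.zero_mem _

lemma good_X7 : Good (X ^ 7) := by
  refine ⟨0, 0, 1, ?_⟩
  have : (X : Polynomial (ZMod 2)) ^ 7 + (C 0 * X + C 0 * X ^ 3 + C 1 * X ^ 7) = 0 := by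
    rw [C_1, C_0]; ring_nf; linear_combination pp ((X : Polynomial (ZMod 2)) ^ 7)
  rw [this]; exact Submodule.zero_mem _

lemma good_X11 : Good (X ^ 11) := by
  have hmem := Submodule.add_mem _ (hC 2 3 11 14 (by norm_num) (by norm_num) rfl rfl)
    (hA 7 14 (by norm_num) rfl)
  have heq : ((X : Polynomial (ZMod 2)) ^ 11 + X ^ 14) + (X ^ 7 + X ^ 14)
      = X ^ 11 + X ^ 7 := by
    linear_combination pp ((X : Polynomial (ZMod 2)) ^ 14)
  rw [heq] at hmem
  exact good_shift _ _ hmem good_X7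

lemma good_mono (n : ℕ) : 1 ≤ n → Good (X ^ n) := by
  induction n using Nat.strong_induction_on with
  | _ n IH =>
    intro h1
    by_cases hn1 : n = 1
    · subst hn1; rw [pow_one]; exact good_X
    by_cases hn3 : n = 3
    · subst hn3; exact good_X3
    by_cases hn7 : n = 7
    · subst hn7; exact good_X7
    by_cases hn11 : n = 11
    · subst hn11; exact good_X11
    by_cases h5d : 5 ∣ n
    · refine ⟨0, 0, 0, ?_⟩
      have : (X : Polynomial (ZMod 2)) ^ n + (C 0 * X + C 0 * X ^ 3 + C 0 * X ^ 7)
          = X ^ n := by rw [C_0]; ring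
      rw [this]
      exact hB (n / 5) n (by omega) (by omega)
    by_cases h2d : 2 ∣ n
    · have hm := hA (n / 2) n (by omega) (by omega)
      rw [add_comm] at hm
      exact good_shift _ _ hm (IH (n / 2) (by omega) (by omega))
    · -- n odd, not a multiple of 5, n ∉ {1,3,7,11}; so n ≥ 9
      have hex : ∃ i j, 1 ≤ j ∧ j < i ∧ n = 4 * i + j := by
        by_cases hlt : n < 21
        · interval_cases n <;>
            first
              | omega
              | exact ⟨2, 1, by omega, by omega, by omega⟩
              | exact ⟨3, 1, by omega, by omega, by omega⟩
              | exact ⟨4, 1, by omega, by omega, by omega⟩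
              | exact ⟨4, 3, by omega, by omega, by omega⟩
        · exact ⟨n / 5 + 1, n - 4 * (n / 5 + 1), by omega, by omega, by omega⟩
      obtain ⟨i, j, hj, hji, hn⟩ := hex
      have hm := hC i j n (4 * j + i) (by omega) (by omega) hn rfl
      exact good_shift _ _ hm (IH (4 * j + i) (by omega) (by omega))

lemma good_all : ∀ (N : ℕ) (p : Polynomial (ZMod 2)), p.natDegree ≤ N → p.coeff 0 = 0 →
    Good p := by
  intro N
  induction N with
  | zero =>
    intro p hd h0
    rw [Polynomial.eq_C_of_natDegree_le_zero hd, h0, C_0]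
    exact good_zero
  | succ N IH =>
    intro p hd h0
    by_cases hd' : p.natDegree ≤ N
    · exact IH p hd' h0
    · have hd1 : 1 ≤ p.natDegree := by omega
      have hp0 : p ≠ 0 := by
        intro h; rw [h] at hd'; simp at hd'
      have hlc : p.leadingCoeff = 1 := by
        rcases zmod2_cases p.leadingCoeff with h | h
        · exact absurd (leadingCoeff_eq_zero.mp h) hp0
        · exact h
      have hkey := p.eraseLead_add_monomial_natDegree_leadingCoeff
      rw [hlc, ← X_pow_eq_monomial] at hkey
      have hgood1 : Good (X ^ p.natDegree) := good_mono _ hd1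
      have hgood2 : Good p.eraseLead := by
        refine IH _ ?_ ?_
        · have := p.eraseLead_natDegree_le
          omega
        · rw [p.eraseLead_coeff 0, if_neg (by omega)]
          exact h0
      rw [← hkey]
      exact good_add _ _ hgood2 hgood1


lemma key010 : ((X + X ^ 2) ^ 3 + X : Polynomial (ZMod 2)) ∈ W2 := by
  have hmem : ((X ^ 3 + X ^ 6) + (X ^ 5) + (X ^ 2 + X ^ 4) + (X ^ 1 + X ^ 2) : Polynomial (ZMod 2)) ∈ W2 :=
    (Submodule.add_mem _ (Submodule.add_mem _ (Submodule.add_mem _ (hA 3 6 (by norm_num) (by norm_num)) (hB 1 5 (by norm_num) (by norm_num))) (hA 2 4 (by norm_num) (by norm_num))) (hA 1 2 (by norm_num) (by norm_num)))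
  have heq : ((X ^ 3 + X ^ 6) + (X ^ 5) + (X ^ 2 + X ^ 4) + (X ^ 1 + X ^ 2) : Polynomial (ZMod 2)) = (X + X ^ 2) ^ 3 + X := by
    linear_combination pp (X ^ 2) + (-1 : Polynomial (ZMod 2)) * pp (X ^ 4) + (-1 : Polynomial (ZMod 2)) * pp (X ^ 5)
  rwa [heq] at hmem

lemma key001 : ((X + X ^ 2) ^ 7 + X : Polynomial (ZMod 2)) ∈ W2 := by
  have hmem : ((X ^ 7 + X ^ 14) + (X ^ 13 + X ^ 7) + (X ^ 6 + X ^ 12) + (X ^ 11 + X ^ 14) + (X ^ 7 + X ^ 14) + (X ^ 10) + (X ^ 9 + X ^ 6) + (X ^ 4 + X ^ 8) + (X ^ 2 + X ^ 4) + (X ^ 1 + X ^ 2) : Polynomial (ZMod 2)) ∈ W2 :=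
    (Submodule.add_mem _ (Submodule.add_mem _ (Submodule.add_mem _ (Submodule.add_mem _ (Submodule.add_mem _ (Submodule.add_mem _ (Submodule.add_mem _ (Submodule.add_mem _ (Submodule.add_mem _ (hA 7 14 (by norm_num) (by norm_num)) (hC 3 1 13 7 (by norm_num) (by norm_num) (by norm_num) (by norm_num))) (hA 6 12 (by norm_num) (by norm_num))) (hC 2 3 11 14 (by norm_num) (by norm_num) (by norm_num) (by norm_num))) (hA 7 14 (by norm_num) (by norm_num))) (hB 2 10 (by norm_num) (by norm_num))) (hC 2 1 9 6 (by norm_num) (by norm_num) (by norm_num) (by norm_num))) (hA 4 8 (by norm_num) (by norm_num))) (hA 2 4 (by norm_num) (by norm_num))) (hA 1 2 (by norm_num) (by norm_num)))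
  have heq : ((X ^ 7 + X ^ 14) + (X ^ 13 + X ^ 7) + (X ^ 6 + X ^ 12) + (X ^ 11 + X ^ 14) + (X ^ 7 + X ^ 14) + (X ^ 10) + (X ^ 9 + X ^ 6) + (X ^ 4 + X ^ 8) + (X ^ 2 + X ^ 4) + (X ^ 1 + X ^ 2) : Polynomial (ZMod 2)) = (X + X ^ 2) ^ 7 + X := by
    linear_combination pp (X ^ 2) + pp (X ^ 4) + pp (X ^ 6) + pp (X ^ 7) + (-3 : Polynomial (ZMod 2)) * pp (X ^ 8) + (-10 : Polynomial (ZMod 2)) * pp (X ^ 9) + (-17 : Polynomial (ZMod 2)) * pp (X ^ 10) + (-17 : Polynomial (ZMod 2)) * pp (X ^ 11) + (-10 : Polynomial (ZMod 2)) * pp (X ^ 12) + (-3 : Polynomial (ZMod 2)) * pp (X ^ 13) + pp (X ^ 14)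
  rwa [heq] at hmem

lemma key110 : ((X + X ^ 2) + (X + X ^ 2) ^ 3 + X : Polynomial (ZMod 2)) ∈ W2 := by
  have hmem : ((X ^ 3 + X ^ 6) + (X ^ 5) + (X ^ 2 + X ^ 4) : Polynomial (ZMod 2)) ∈ W2 :=
    (Submodule.add_mem _ (Submodule.add_mem _ (hA 3 6 (by norm_num) (by norm_num)) (hB 1 5 (by norm_num) (by norm_num))) (hA 2 4 (by norm_num) (by norm_num)))
  have heq : ((X ^ 3 + X ^ 6) + (X ^ 5) + (X ^ 2 + X ^ 4) : Polynomial (ZMod 2)) = (X + X ^ 2) + (X + X ^ 2) ^ 3 + X := by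
    linear_combination (-1 : Polynomial (ZMod 2)) * pp (X ^ 1) + (-1 : Polynomial (ZMod 2)) * pp (X ^ 4) + (-1 : Polynomial (ZMod 2)) * pp (X ^ 5)
  rwa [heq] at hmem

lemma key101 : ((X + X ^ 2) + (X + X ^ 2) ^ 7 + X : Polynomial (ZMod 2)) ∈ W2 := by
  have hmem : ((X ^ 7 + X ^ 14) + (X ^ 13 + X ^ 7) + (X ^ 6 + X ^ 12) + (X ^ 11 + X ^ 14) + (X ^ 7 + X ^ 14) + (X ^ 10) + (X ^ 9 + X ^ 6) + (X ^ 4 + X ^ 8) + (X ^ 2 + X ^ 4) : Polynomial (ZMod 2)) ∈ W2 :=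
    (Submodule.add_mem _ (Submodule.add_mem _ (Submodule.add_mem _ (Submodule.add_mem _ (Submodule.add_mem _ (Submodule.add_mem _ (Submodule.add_mem _ (Submodule.add_mem _ (hA 7 14 (by norm_num) (by norm_num)) (hC 3 1 13 7 (by norm_num) (by norm_num) (by norm_num) (by norm_num))) (hA 6 12 (by norm_num) (by norm_num))) (hC 2 3 11 14 (by norm_num) (by norm_num) (by norm_num) (by norm_num))) (hA 7 14 (by norm_num) (by norm_num))) (hB 2 10 (by norm_num) (by norm_num))) (hC 2 1 9 6 (by norm_num) (by norm_num) (by norm_num) (by norm_num))) (hA 4 8 (by norm_num) (by norm_num))) (hA 2 4 (by norm_num) (by norm_num)))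
  have heq : ((X ^ 7 + X ^ 14) + (X ^ 13 + X ^ 7) + (X ^ 6 + X ^ 12) + (X ^ 11 + X ^ 14) + (X ^ 7 + X ^ 14) + (X ^ 10) + (X ^ 9 + X ^ 6) + (X ^ 4 + X ^ 8) + (X ^ 2 + X ^ 4) : Polynomial (ZMod 2)) = (X + X ^ 2) + (X + X ^ 2) ^ 7 + X := by
    linear_combination (-1 : Polynomial (ZMod 2)) * pp (X ^ 1) + pp (X ^ 4) + pp (X ^ 6) + pp (X ^ 7) + (-3 : Polynomial (ZMod 2)) * pp (X ^ 8) + (-10 : Polynomial (ZMod 2)) * pp (X ^ 9) + (-17 : Polynomial (ZMod 2)) * pp (X ^ 10) + (-17 : Polynomial (ZMod 2)) * pp (X ^ 11) + (-10 : Polynomial (ZMod 2)) * pp (X ^ 12) + (-3 : Polynomial (ZMod 2)) * pp (X ^ 13) + pp (X ^ 14)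
  rwa [heq] at hmem

lemma key011 : ((X + X ^ 5) ^ 3 + (X + X ^ 5) ^ 7 + X : Polynomial (ZMod 2)) ∈ W2 := by
  have hmem : ((X ^ 35) + (X ^ 31 + X ^ 19) + (X ^ 27 + X ^ 18) + (X ^ 23 + X ^ 17) + (X ^ 9 + X ^ 18) + (X ^ 17 + X ^ 8) + (X ^ 9 + X ^ 6) + (X ^ 4 + X ^ 8) + (X ^ 3 + X ^ 6) + (X ^ 2 + X ^ 4) + (X ^ 1 + X ^ 2) : Polynomial (ZMod 2)) ∈ W2 :=
    (Submodule.add_mem _ (Submodule.add_mem _ (Submodule.add_mem _ (Submodule.add_mem _ (Submodule.add_mem _ (Submodule.add_mem _ (Submodule.add_mem _ (Submodule.add_mem _ (Submodule.add_mem _ (Submodule.add_mem _ (hB 7 35 (by norm_num) (by norm_num)) (hC 7 3 31 19 (by norm_num) (by norm_num) (by norm_num) (by norm_num))) (hC 6 3 27 18 (by norm_num) (by norm_num) (by norm_num) (by norm_num))) (hC 5 3 23 17 (by norm_num) (by norm_num) (by norm_num) (by norm_num))) (hA 9 18 (by norm_num) (by norm_num))) (hC 4 1 17 8 (by norm_num)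 (by norm_num) (by norm_num) (by norm_num))) (hC 2 1 9 6 (by norm_num) (by norm_num) (by norm_num) (by norm_num))) (hA 4 8 (by norm_num) (by norm_num))) (hA 3 6 (by norm_num) (by norm_num))) (hA 2 4 (by norm_num) (by norm_num))) (hA 1 2 (by norm_num) (by norm_num)))
  have heq : ((X ^ 35) + (X ^ 31 + X ^ 19) + (X ^ 27 + X ^ 18) + (X ^ 23 + X ^ 17) + (X ^ 9 + X ^ 18) + (X ^ 17 + X ^ 8) + (X ^ 9 + X ^ 6) + (X ^ 4 + X ^ 8) + (X ^ 3 + X ^ 6) + (X ^ 2 + X ^ 4) + (X ^ 1 + X ^ 2) : Polynomial (ZMod 2)) = (X + X ^ 5) ^ 3 + (X + X ^ 5) ^ 7 + X := by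
    linear_combination pp (X ^ 2) + pp (X ^ 4) + pp (X ^ 6) + (-2 : Polynomial (ZMod 2)) * pp (X ^ 7) + pp (X ^ 8) + pp (X ^ 9) + (-5 : Polynomial (ZMod 2)) * pp (X ^ 11) + (-11 : Polynomial (ZMod 2)) * pp (X ^ 15) + pp (X ^ 17) + pp (X ^ 18) + (-17 : Polynomial (ZMod 2)) * pp (X ^ 19) + (-17 : Polynomial (ZMod 2)) * pp (X ^ 23) + (-10 : Polynomial (ZMod 2)) * pp (X ^ 27) + (-3 : Polynomial (ZMod 2)) * pp (X ^ 31)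
  rwa [heq] at hmem

lemma key111 : ((X + X ^ 3 + X ^ 6) + (X + X ^ 3 + X ^ 6) ^ 3 + (X + X ^ 3 + X ^ 6) ^ 7 + X : Polynomial (ZMod 2)) ∈ W2 := by
  have hmem : ((X ^ 21 + X ^ 42) + (X ^ 39 + X ^ 36) + (X ^ 37 + X ^ 28) + (X ^ 33 + X ^ 27) + (X ^ 16 + X ^ 32) + (X ^ 31 + X ^ 19) + (X ^ 30) + (X ^ 29 + X ^ 26) + (X ^ 14 + X ^ 28) + (X ^ 27 + X ^ 18) + (X ^ 13 + X ^ 26) + (X ^ 25) + (X ^ 12 + X ^ 24) + (X ^ 11 + X ^ 22) + (X ^ 20) + (X ^ 19 + X ^ 16) + (X ^ 8 + X ^ 16) + (X ^ 7 + X ^ 14) + (X ^ 13 + X ^ 7) + (X ^ 6 + X ^ 12) + (X ^ 5) : Polynomial (ZMod 2)) ∈ W2 :=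
    (Submodule.add_mem _ (Submodule.add_mem _ (Submodule.add_mem _ (Submodule.add_mem _ (Submodule.add_mem _ (Submodule.add_mem _ (Submodule.add_mem _ (Submodule.add_mem _ (Submodule.add_mem _ (Submodule.add_mem _ (Submodule.add_mem _ (Submodule.add_mem _ (Submodule.add_mem _ (Submodule.add_mem _ (Submodule.add_mem _ (Submodule.add_mem _ (Submodule.add_mem _ (Submodule.add_mem _ (Submodule.add_mem _ (Submodule.add_mem _ (hA 21 42 (by norm_num) (by norm_num)) (hC 8 7 39 36 (by norm_num) (by norm_num) (by norm_num) (by norm_num))) (hC 8 5 37 28 (by norm_num) (by norm_num) (by norm_num) (by norm_num))) (hC 7 5 33 27 (by norm_num) (by norm_num) (by norm_num) (by norm_num))) (hA 16 32 (by norm_num) (by norm_num))) (hC 7 3 31 19 (by norm_num) (by norm_num) (by norm_num) (by norm_num))) (hB 6 30 (by norm_num) (by norm_num))) (hC 6 5 29 26 (by norm_num) (by norm_num) (by norm_num) (by norm_num))) (hA 14 28 (by norm_num) (by norm_num))) (hC 6 3 27 18 (by norm_num) (by norm_num) (by norm_num) (by norm_num))) (hA 13 26 (by norm_num) (by norm_num)))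 (hB 5 25 (by norm_num) (by norm_num))) (hA 12 24 (by norm_num) (by norm_num))) (hA 11 22 (by norm_num) (by norm_num))) (hB 4 20 (by norm_num) (by norm_num))) (hC 4 3 19 16 (by norm_num) (by norm_num) (by norm_num) (by norm_num))) (hA 8 16 (by norm_num) (by norm_num))) (hA 7 14 (by norm_num) (by norm_num))) (hC 3 1 13 7 (by norm_num) (by norm_num) (by norm_num) (by norm_num))) (hA 6 12 (by norm_num) (by norm_num))) (hB 1 5 (by norm_num) (by norm_num)))
  have heq : ((X ^ 21 + X ^ 42) + (X ^ 39 + X ^ 36) + (X ^ 37 + X ^ 28) + (X ^ 33 + X ^ 27) + (X ^ 16 + X ^ 32) + (X ^ 31 + X ^ 19) + (X ^ 30) + (X ^ 29 + X ^ 26) + (X ^ 14 + X ^ 28) + (X ^ 27 + X ^ 18) + (X ^ 13 + X ^ 26) + (X ^ 25) + (X ^ 12 + X ^ 24) + (X ^ 11 + X ^ 22) + (X ^ 20) + (X ^ 19 + X ^ 16) + (X ^ 8 + X ^ 16) + (X ^ 7 + X ^ 14) + (X ^ 13 + X ^ 7) + (X ^ 6 + X ^ 12) + (X ^ 5) : Polynomial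 (ZMod 2)) = (X + X ^ 3 + X ^ 6) + (X + X ^ 3 + X ^ 6) ^ 3 + (X + X ^ 3 + X ^ 6) ^ 7 + X := by
    linear_combination (-1 : Polynomial (ZMod 2)) * pp (X ^ 1) + (-1 : Polynomial (ZMod 2)) * pp (X ^ 3) + (-1 : Polynomial (ZMod 2)) * pp (X ^ 5) + (-1 : Polynomial (ZMod 2)) * pp (X ^ 7) + (-1 : Polynomial (ZMod 2)) * pp (X ^ 8) + (-4 : Polynomial (ZMod 2)) * pp (X ^ 9) + (-3 : Polynomial (ZMod 2)) * pp (X ^ 10) + (-10 : Polynomial (ZMod 2)) * pp (X ^ 11) + (-4 : Polynomial (ZMod 2)) * pp (X ^ 12) + (-18 : Polynomial (ZMod 2)) * pp (X ^ 13) + (-20 : Polynomial (ZMod 2)) * pp (X ^ 14) + (-19 : Polynomial (ZMod 2)) * pp (X ^ 15) + (-51 : Polynomial (ZMod 2)) * pp (X ^ 16) + (-21 : Polynomial (ZMod 2)) * pp (X ^ 17) + (-70 : Polynomial (ZMod 2)) * pp (X ^ 18) + (-55 : Polynomial (ZMod 2)) * pp (X ^ 19) + (-52 : Polynomial (ZMod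 2)) * pp (X ^ 20) + (-105 : Polynomial (ZMod 2)) * pp (X ^ 21) + (-38 : Polynomial (ZMod 2)) * pp (X ^ 22) + (-105 : Polynomial (ZMod 2)) * pp (X ^ 23) + (-73 : Polynomial (ZMod 2)) * pp (X ^ 24) + (-52 : Polynomial (ZMod 2)) * pp (X ^ 25) + (-104 : Polynomial (ZMod 2)) * pp (X ^ 26) + (-27 : Polynomial (ZMod 2)) * pp (X ^ 27) + (-69 : Polynomial (ZMod 2)) * pp (X ^ 28) + (-52 : Polynomial (ZMod 2)) * pp (X ^ 29) + (-17 : Polynomial (ZMod 2)) * pp (X ^ 30) + (-52 : Polynomial (ZMod 2)) * pp (X ^ 31) + (-10 : Polynomial (ZMod 2)) * pp (X ^ 32) + (-17 : Polynomial (ZMod 2)) * pp (X ^ 33) + (-21 : Polynomial (ZMod 2)) * pp (X ^ 34) + (-10 : Polynomial (ZMod 2)) * pp (X ^ 36) + (-3 : Polynomial (ZMod 2)) * pp (X ^ 37) + (-3 : Polynomial (ZMod 2)) * pp (X ^ 39)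
  rwa [heq] at hmem

end W2Aux

open Polynomial

/-- Over the field with 2 elements, the T-space `W₂` generated by `{x + x², x⁵}` is a
maximal T-space of `k[x]₀`, and moreover `x⁷ ∉ W₂`. -/
theorem W2_isMaximal :
    IsTSpace (ZMod 2) (TSpaceGen (ZMod 2) {Polynomial.X + Polynomial.X ^ 2, Polynomial.X ^ 5}) ∧
      Polynomial.X ∉
        TSpaceGen (ZMod 2) {Polynomial.X + Polynomial.X ^ 2, Polynomial.X ^ 5} ∧
      (∀ U : Submodule (ZMod 2) (Polynomial (ZMod 2)), IsTSpace (ZMod 2) U →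
        TSpaceGen (ZMod 2) {Polynomial.X + Polynomial.X ^ 2, Polynomial.X ^ 5} < U →
        Polynomial.X ∈ U) ∧
      Polynomial.X ^ 7 ∉
        TSpaceGen (ZMod 2) {Polynomial.X + Polynomial.X ^ 2, Polynomial.X ^ 5} := by
  refine ⟨W2Aux.W2_tspace, W2Aux.X_not_mem_W2, ?_, W2Aux.X7_not_mem_W2⟩
  intro U hU hlt
  obtain ⟨p, hpU, hpW⟩ := SetLike.exists_of_lt hlt
  have hWU : TSpaceGen (ZMod 2) {X + X ^ 2, X ^ 5} ≤ U := le_of_lt hlt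
  have hp0 : p.coeff 0 = 0 := hU.1 p hpU
  obtain ⟨α, β, γ, hw⟩ := W2Aux.good_all p.natDegree p le_rfl hp0
  have hstep : ∀ r : Polynomial (ZMod 2),
      p + r ∈ TSpaceGen (ZMod 2) {X + X ^ 2, X ^ 5} → r ∈ U := by
    intro r hr
    have heq : r = p + (p + r) := by linear_combination (-1 : Polynomial (ZMod 2)) * W2Aux.pp p
    rw [heq]; exact U.add_mem hpU (hWU hr)
  have main : ∀ q' g : Polynomial (ZMod 2), q' ∈ U → g.coeff 0 = 0 →
      q'.comp g + X ∈ TSpaceGen (ZMod 2) {X + X ^ 2, X ^ 5} → X ∈ U := by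
    intro q' g hq' hg hkey
    have h1 : q'.comp g ∈ U := hU.2 q' hq' g hg
    have h2 : q'.comp g + X ∈ U := hWU hkey
    have heq : (X : Polynomial (ZMod 2)) = q'.comp g + (q'.comp g + X) := by
      linear_combination (-1 : Polynomial (ZMod 2)) * W2Aux.pp (q'.comp g)
    rw [heq]; exact U.add_mem h1 h2
  rcases W2Aux.zmod2_cases α with hα | hα <;> subst hα <;>
    rcases W2Aux.zmod2_cases β with hβ | hβ <;> subst hβ <;>
    rcases W2Aux.zmod2_cases γ with hγ | hγ <;> subst hγ <;>
    simp only [Polynomial.C_0, Polynomial.C_1, zero_mul, one_mul, zero_add, add_zero] at hw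
  · -- (0,0,0)
    exact absurd hw hpW
  · -- (0,0,1) : r = X^7
    refine main (X ^ 7) (X + X ^ 2) (hstep _ hw) (by simp) ?_
    rw [pow_comp, X_comp]
    exact W2Aux.key001
  · -- (0,1,0) : r = X^3
    refine main (X ^ 3) (X + X ^ 2) (hstep _ hw) (by simp) ?_
    rw [pow_comp, X_comp]
    exact W2Aux.key010
  · -- (0,1,1) : r = X^3 + X^7
    refine main (X ^ 3 + X ^ 7) (X + X ^ 5) (hstep _ hw) (by simp) ?_
    simp only [add_comp, pow_comp, X_comp]
    exact W2Aux.key011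
  · -- (1,0,0) : r = X
    exact hstep _ hw
  · -- (1,0,1) : r = X + X^7
    refine main (X + X ^ 7) (X + X ^ 2) (hstep _ hw) (by simp) ?_
    simp only [add_comp, pow_comp, X_comp]
    exact W2Aux.key101
  · -- (1,1,0) : r = X + X^3
    refine main (X + X ^ 3) (X + X ^ 2) (hstep _ hw) (by simp) ?_
    simp only [add_comp, pow_comp, X_comp]
    exact W2Aux.key110
  · -- (1,1,1) : r = X + X^3 + X^7
    refine main (X + X ^ 3 + X ^ 7) (X + X ^ 3 + X ^ 6) (hstep _ hw) (by simp) ?_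
    simp only [add_comp, pow_comp, X_comp]
    exact W2Aux.key111
end

section
/- Let k be the field with 2 elements. Then the T-space of k[x]_0 generated by {x + x², x⁷} is all of k[x]_0; that is, x belongs to the T-space of k[x]_0 generated by {x + x², x⁷}. -/
open Polynomial in
/-- Over the field with 2 elements, the T-space generated by `{x + x², x⁷}` is all of
`k[x]₀`; that is, `x` belongs to it. -/
theorem TSpace_x_x7_eq_top :
    Polynomial.X ∈
      TSpaceGen (ZMod 2) {Polynomial.X + Polynomial.X ^ 2, Polynomial.X ^ 7} := by
  rw [TSpaceGen, Submodule.mem_sInf]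
  rintro V ⟨⟨-, hcomp⟩, hS⟩
  have hA : (X + X ^ 2 : Polynomial (ZMod 2)) ∈ V := hS (Set.mem_insert _ _)
  have hB : (X ^ 7 : Polynomial (ZMod 2)) ∈ V :=
    hS (Set.mem_insert_of_mem _ rfl)
  have hg : ∀ n m : ℕ, 1 ≤ n → m = 2 * n → (X ^ n + X ^ m : Polynomial (ZMod 2)) ∈ V := by
    intro n m hn hm
    have h0 : (X ^ n : Polynomial (ZMod 2)).coeff 0 = 0 := by
      simp [Polynomial.coeff_X_pow]; omega
    have := hcomp _ hA (X ^ n) h0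
    simp only [Polynomial.add_comp, Polynomial.X_comp, Polynomial.pow_comp] at this
    rw [← pow_mul, mul_comm n 2, ← hm] at this
    exact this
  have hh : ∀ h : Polynomial (ZMod 2), h.coeff 0 = 0 → h ^ 7 ∈ V := by
    intro h h0
    have := hcomp _ hB h h0
    simpa using this
  have h2 : (2 : Polynomial (ZMod 2)) = 0 := CharTwo.two_eq_zero
  have key : (X : Polynomial (ZMod 2)) =
      (X^1 + X^2) + (X^2 + X^4) + (X^4 + X^8) + (X^7 + X^14) + (X^9 + X^18) + (X^11 + X^22) + (X^13 + X^26) + (X^14 + X^28) + (X^15 + X^30) + (X^16 + X^32) + (X^17 + X^34) + (X^19 + X^38) + (X^1 : Polynomial (ZMod 2))^7 + (X^1 + X^3 : Polynomial (ZMod 2))^7 + (X^1 + X^4 : Polynomial (ZMod 2))^7 + (X^1 + X^5 : Polynomial (ZMod 2))^7 + (X^1 + X^6 : Polynomial (ZMod 2))^7 + (X^2 + X^3 : Polynomial (ZMod 2))^7 + (X^3 + X^4 : Polynomial (ZMod 2))^7 + (X^1 + X^2 + X^4 : Polynomial (ZMod 2))^7 + (X^1 + X^2 + X^5 : Polynomial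 (ZMod 2))^7 + (X^1 + X^2 + X^6 : Polynomial (ZMod 2))^7 + (X^1 + X^3 + X^4 : Polynomial (ZMod 2))^7 := by
    linear_combination ((-1 : Polynomial (ZMod 2)) * X^2 + (-1 : Polynomial (ZMod 2)) * X^4 + (-5 : Polynomial (ZMod 2)) * X^7 + (-11 : Polynomial (ZMod 2)) * X^8 + (-39 : Polynomial (ZMod 2)) * X^9 + (-63 : Polynomial (ZMod 2)) * X^10 + (-102 : Polynomial (ZMod 2)) * X^11 + (-133 : Polynomial (ZMod 2)) * X^12 + (-221 : Polynomial (ZMod 2)) * X^13 + (-283 : Polynomial (ZMod 2)) * X^14 + (-361 : Polynomial (ZMod 2)) * X^15 + (-368 : Polynomial (ZMod 2)) * X^16 + (-417 : Polynomial (ZMod 2)) * X^17 + (-417 : Polynomial (ZMod 2)) * X^18 + (-438 : Polynomial (ZMod 2)) * X^19 + (-385 : Polynomial (ZMod 2)) * X^20 + (-317 : Polynomial (ZMod 2)) * X^21 + (-242 : Polynomial (ZMod 2)) * X^22 + (-217 : Polynomial (ZMod 2)) * X^23 + (-224 : Polynomial (ZMod 2)) * X^24 + (-168 : Polynomial (ZMod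 2)) * X^25 + (-60 : Polynomial (ZMod 2)) * X^26 + (-63 : Polynomial (ZMod 2)) * X^27 + (-76 : Polynomial (ZMod 2)) * X^28 + (-63 : Polynomial (ZMod 2)) * X^29 + (-18 : Polynomial (ZMod 2)) * X^30 + (-7 : Polynomial (ZMod 2)) * X^31 + (-25 : Polynomial (ZMod 2)) * X^32 + (-21 : Polynomial (ZMod 2)) * X^33 + (-11 : Polynomial (ZMod 2)) * X^34 + (-1 : Polynomial (ZMod 2)) * X^35 + (-7 : Polynomial (ZMod 2)) * X^37 + (-4 : Polynomial (ZMod 2)) * X^38 + (-1 : Polynomial (ZMod 2)) * X^42) * h2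
  rw [key]
  exact (add_mem (add_mem (add_mem (add_mem (add_mem (add_mem (add_mem (add_mem (add_mem (add_mem (add_mem (add_mem (add_mem (add_mem (add_mem (add_mem (add_mem (add_mem (add_mem (add_mem (add_mem (add_mem (hg 1 2 (by norm_num) (by norm_num)) (hg 2 4 (by norm_num) (by norm_num))) (hg 4 8 (by norm_num) (by norm_num))) (hg 7 14 (by norm_num) (by norm_num))) (hg 9 18 (by norm_num) (by norm_num))) (hg 11 22 (by norm_num) (by norm_num))) (hg 13 26 (by norm_num) (by norm_num))) (hg 14 28 (by norm_num) (by norm_num))) (hg 15 30 (by norm_num) (by norm_num))) (hg 16 32 (by norm_num) (by norm_num))) (hg 17 34 (by norm_num) (by norm_num))) (hg 19 38 (by norm_num) (by norm_num))) (hh (X^1 : Polynomial (ZMod 2)) (by simp [Polynomial.coeff_X_pow]))) (hh (X^1 + X^3 : Polynomial (ZMod 2)) (by simp [Polynomial.coeff_X_pow]))) (hh (X^1 + X^4 : Polynomial (ZMod 2)) (by simp [Polynomial.coeff_X_pow]))) (hh (X^1 + X^5 : Polynomial (ZMod 2)) (by simp [Polynomial.coeff_X_pow]))) (hh (X^1 +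 X^6 : Polynomial (ZMod 2)) (by simp [Polynomial.coeff_X_pow]))) (hh (X^2 + X^3 : Polynomial (ZMod 2)) (by simp [Polynomial.coeff_X_pow]))) (hh (X^3 + X^4 : Polynomial (ZMod 2)) (by simp [Polynomial.coeff_X_pow]))) (hh (X^1 + X^2 + X^4 : Polynomial (ZMod 2)) (by simp [Polynomial.coeff_X_pow]))) (hh (X^1 + X^2 + X^5 : Polynomial (ZMod 2)) (by simp [Polynomial.coeff_X_pow]))) (hh (X^1 + X^2 + X^6 : Polynomial (ZMod 2)) (by simp [Polynomial.coeff_X_pow]))) (hh (X^1 + X^3 + X^4 : Polynomial (ZMod 2)) (by simp [Polynomial.coeff_X_pow])))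
end

section
/- Let k be an infinite field, let X be a nonempty type, fix x ∈ X, and let c ∈ k⟨X⟩ be defined by c = ι(x)^p if the characteristic p of k is positive, and c = 1 if k has characteristic 0. Let Y = T^{(2)} + S, where S is the T-space of k⟨X⟩ generated by c. Then every proper T-space of k⟨X⟩ is contained in Y; that is, every T-space V of k⟨X⟩ with V ≠ k⟨X⟩ satisfies V ⊆ Y. -/
/-- A T-space of the free unital associative algebra `k⟨X⟩`: a `k`-submodule invariant
under every `k`-algebra endomorphism of `k⟨X⟩`. -/
def IsTSpaceF (k X : Type*) [Field k] (V : Submodule k (FreeAlgebra k X)) : Prop :=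
  ∀ φ : FreeAlgebra k X →ₐ[k] FreeAlgebra k X, ∀ v ∈ V, φ v ∈ V

/-- The T-space of `k⟨X⟩` generated by a set `S`. -/
def TSpaceGenF (k X : Type*) [Field k] (S : Set (FreeAlgebra k X)) :
    Submodule k (FreeAlgebra k X) :=
  sInf {V | IsTSpaceF k X V ∧ S ⊆ (V : Set (FreeAlgebra k X))}

/-- A T-ideal of `k⟨X⟩`: a two-sided ideal that is also a T-space. -/
def IsTIdealF (k X : Type*) [Field k] (V : Submodule k (FreeAlgebra k X)) : Prop :=
  IsTSpaceF k X V ∧ ∀ a ∈ V, ∀ r : FreeAlgebra k X, r * a ∈ V ∧ a * r ∈ V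

/-- The T-ideal of `k⟨X⟩` generated by a set `S`. -/
def TIdealGenF (k X : Type*) [Field k] (S : Set (FreeAlgebra k X)) :
    Submodule k (FreeAlgebra k X) :=
  sInf {V | IsTIdealF k X V ∧ S ⊆ (V : Set (FreeAlgebra k X))}

/-- `T⁽²⁾`: the smallest T-ideal of `k⟨X⟩` containing all commutators `ab - ba`. -/
def T2 (k X : Type*) [Field k] : Submodule k (FreeAlgebra k X) :=
  sInf {V | IsTIdealF k X V ∧ ∀ a b : FreeAlgebra k X, a * b - b * a ∈ V}

/-! ### Auxiliary machinery -/

open Finset in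
lemma vandermonde_mem {k M : Type*} [Field k] [Infinite k] [AddCommGroup M] [Module k M]
    (V : Submodule k M) {N : ℕ} (a : Fin N → M)
    (h : ∀ s : k, ∑ n : Fin N, s ^ (n : ℕ) • a n ∈ V) : ∀ n, a n ∈ V := by
  intro n
  set s : Fin N → k := fun j => (Infinite.natEmbedding k) (j : ℕ) with hs
  have hsinj : Function.Injective s := fun i j hij => by
    have := (Infinite.natEmbedding k).injective hij
    exact Fin.ext (by exact_mod_cast this)
  set W : Matrix (Fin N) (Fin N) k := Matrix.vandermonde s with hW
  have hdet : IsUnit W.det :=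
    (Matrix.det_vandermonde_ne_zero_iff.mpr hsinj).isUnit
  have hWinv : W⁻¹ * W = 1 := Matrix.nonsing_inv_mul W hdet
  have key : a n = ∑ j, (W⁻¹ n j) • ∑ i, W j i • a i := by
    have : ∀ j : Fin N, (W⁻¹ n j) • ∑ i, W j i • a i
        = ∑ i, (W⁻¹ n j * W j i) • a i := by
      intro j; rw [Finset.smul_sum]; simp [smul_smul]
    rw [Finset.sum_congr rfl fun j _ => this j, Finset.sum_comm]
    have : ∀ i : Fin N, ∑ j, (W⁻¹ n j * W j i) • a i = ((W⁻¹ * W) n i) • a i := by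
      intro i; rw [← Finset.sum_smul]; rfl
    rw [Finset.sum_congr rfl fun i _ => this i, hWinv]
    simp [Matrix.one_apply]
  rw [key]
  refine Submodule.sum_mem V fun j _ => Submodule.smul_mem V _ ?_
  have := h (s j)
  simpa [hW, Matrix.vandermonde] using this

/-- The abelianization map `k⟨X⟩ → k[X]`. -/
noncomputable def piAb (k X : Type*) [Field k] : FreeAlgebra k X →ₐ[k] MvPolynomial X k :=
  FreeAlgebra.lift k MvPolynomial.X

/-- A noncommutative word lifting the commutative monomial `d`. -/
noncomputable def wordF (k : Type*) [Field k] {X : Type*} (d : X →₀ ℕ) : FreeAlgebra k X :=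
  ((d.toMultiset.map (FreeAlgebra.ι k)).toList).prod

lemma piAb_word (k : Type*) [Field k] {X : Type*} (d : X →₀ ℕ) :
    piAb k X (wordF k d) = MvPolynomial.monomial d 1 := by
  rw [wordF, map_list_prod]
  have h1 : ((d.toMultiset.map (FreeAlgebra.ι k)).toList.map (piAb k X)).prod
      = ((d.toMultiset.map (FreeAlgebra.ι k)).map (piAb k X)).prod := by
    rw [← Multiset.prod_coe (List.map _ _), ← Multiset.map_coe, Multiset.coe_toList]
  rw [h1, Multiset.map_map]
  have h2 : (piAb k X) ∘ (FreeAlgebra.ι k) = (MvPolynomial.X : X → MvPolynomial X k) := by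
    funext y; simp [piAb]
  rw [h2, Finsupp.toMultiset_map, Finsupp.prod_toMultiset,
    Finsupp.prod_mapDomain_index (fun b => pow_zero b) (fun b m n => pow_add b m n),
    MvPolynomial.monomial_eq, map_one, one_mul]

/-- Linear lifting of `k[X]` into `k⟨X⟩` sending a monomial to a lifting word. -/
noncomputable def LF {k X : Type*} [Field k] : MvPolynomial X k →ₗ[k] FreeAlgebra k X :=
  (Finsupp.lsum k fun d => LinearMap.toSpanSingleton k _ (wordF k d)) ∘ₗ
    (AddMonoidAlgebra.coeffLinearEquiv k).toLinearMap

lemma LF_monomial {k X : Type*} [Field k] (d : X →₀ ℕ) (c : k) :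
    LF (MvPolynomial.monomial d c) = c • wordF k d := by
  rw [LF, LinearMap.comp_apply]
  have h : (AddMonoidAlgebra.coeffLinearEquiv k).toLinearMap (MvPolynomial.monomial d c)
      = Finsupp.single d c := by
    simp [MvPolynomial.monomial, AddMonoidAlgebra.coeffLinearEquiv]
  rw [h, Finsupp.lsum_single]
  simp

section ker
variable {k X : Type*} [Field k] (V : Submodule k (FreeAlgebra k X))
  (hid : ∀ a ∈ V, ∀ r : FreeAlgebra k X, r * a ∈ V ∧ a * r ∈ V)
  (hc : ∀ a b : FreeAlgebra k X, a * b - b * a ∈ V)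

include hid hc

lemma perm_sub_mem {l₁ l₂ : List (FreeAlgebra k X)} (h : l₁.Perm l₂) :
    l₁.prod - l₂.prod ∈ V := by
  induction h with
  | nil => simpa using V.zero_mem
  | cons z h ih =>
      have := (hid _ ih z).1
      simpa [List.prod_cons, mul_sub] using this
  | swap z y l =>
      have := (hid _ (hc y z) l.prod).2
      simpa [List.prod_cons, sub_mul, mul_assoc] using this
  | trans h₁ h₂ ih₁ ih₂ => simpa using V.add_mem ih₁ ih₂

lemma word_mul_sub_mem (d e : X →₀ ℕ) :
    wordF k d * wordF k e - wordF k (d + e) ∈ V := by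
  have hperm : ((d.toMultiset.map (FreeAlgebra.ι k)).toList
      ++ (e.toMultiset.map (FreeAlgebra.ι k)).toList).Perm
      (((d + e).toMultiset.map (FreeAlgebra.ι k)).toList) := by
    rw [← Multiset.coe_eq_coe, ← Multiset.coe_add, Multiset.coe_toList, Multiset.coe_toList,
      Multiset.coe_toList, Finsupp.toMultiset_add, Multiset.map_add]
  have := perm_sub_mem V hid hc hperm
  simpa [wordF, List.prod_append] using this

lemma LF_mul_sub_mem (f g : MvPolynomial X k) : LF f * LF g - LF (f * g) ∈ V := by
  induction f using MvPolynomial.induction_on' with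
  | monomial d c =>
      induction g using MvPolynomial.induction_on' with
      | monomial e c' =>
          rw [MvPolynomial.monomial_mul, LF_monomial, LF_monomial, LF_monomial,
            smul_mul_smul_comm]
          rw [← smul_sub]
          exact V.smul_mem _ (word_mul_sub_mem V hid hc d e)
      | add g₁ g₂ ih₁ ih₂ =>
          have : LF (MvPolynomial.monomial d c) * LF (g₁ + g₂)
              - LF (MvPolynomial.monomial d c * (g₁ + g₂))
              = (LF (MvPolynomial.monomial d c) * LF g₁ - LF (MvPolynomial.monomial d c * g₁))
              + (LF (MvPolynomial.monomial d c) * LF g₂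
                - LF (MvPolynomial.monomial d c * g₂)) := by
            rw [map_add, mul_add, mul_add, map_add]; noncomm_ring
          rw [this]; exact V.add_mem ih₁ ih₂
  | add f₁ f₂ ih₁ ih₂ =>
      have : LF (f₁ + f₂) * LF g - LF ((f₁ + f₂) * g)
          = (LF f₁ * LF g - LF (f₁ * g)) + (LF f₂ * LF g - LF (f₂ * g)) := by
        rw [map_add, add_mul, add_mul, map_add]; noncomm_ring
      rw [this]; exact V.add_mem ih₁ ih₂

lemma sub_LF_mem (a : FreeAlgebra k X) : a - LF (piAb k X a) ∈ V := by
  induction a using FreeAlgebra.induction with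
  | grade0 r =>
      have : piAb k X (algebraMap k _ r) = MvPolynomial.C r := by
        rw [AlgHom.commutes]; rfl
      rw [this]
      have : LF (MvPolynomial.C r) = r • (1 : FreeAlgebra k X) := by
        rw [MvPolynomial.C_apply, LF_monomial]
        simp [wordF]
      rw [this, Algebra.algebraMap_eq_smul_one]
      simpa using V.zero_mem
  | grade1 y =>
      have h1 : piAb k X (FreeAlgebra.ι k y) = MvPolynomial.X y := by simp [piAb]
      rw [h1, show (MvPolynomial.X y : MvPolynomial X k)
        = MvPolynomial.monomial (Finsupp.single y 1) 1 from rfl, LF_monomial]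
      have : wordF k (Finsupp.single y 1) = FreeAlgebra.ι k y := by
        simp [wordF, Finsupp.toMultiset_single]
      rw [this]
      simpa using V.zero_mem
  | mul a b iha ihb =>
      have key : a * b - LF (piAb k X (a * b))
          = a * (b - LF (piAb k X b)) + (a - LF (piAb k X a)) * LF (piAb k X b)
          + (LF (piAb k X a) * LF (piAb k X b) - LF (piAb k X a * piAb k X b)) := by
        rw [map_mul]; noncomm_ring
      rw [key]
      exact V.add_mem (V.add_mem (hid _ ihb a).1 (hid _ iha (LF (piAb k X b))).2)
        (LF_mul_sub_mem V hid hc _ _)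
  | add a b iha ihb =>
      have : a + b - LF (piAb k X (a + b))
          = (a - LF (piAb k X a)) + (b - LF (piAb k X b)) := by
        rw [map_add, map_add]; noncomm_ring
      rw [this]; exact V.add_mem iha ihb

lemma ker_piAb_mem {a : FreeAlgebra k X} (ha : piAb k X a = 0) : a ∈ V := by
  have := sub_LF_mem V hid hc a
  rwa [ha, map_zero, sub_zero] at this
end ker

lemma mem_T2_of_piAb_eq_zero {k X : Type*} [Field k] {a : FreeAlgebra k X}
    (ha : piAb k X a = 0) : a ∈ T2 k X :=
  Submodule.mem_sInf.mpr fun W hW => ker_piAb_mem W hW.1.2 hW.2 ha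

lemma self_mem_TSpaceGenF {k X : Type*} [Field k] {S : Set (FreeAlgebra k X)}
    {c : FreeAlgebra k X} (hc : c ∈ S) : c ∈ TSpaceGenF k X S :=
  Submodule.mem_sInf.mpr fun W hW => hW.2 hc

lemma apply_mem_TSpaceGenF {k X : Type*} [Field k] {S : Set (FreeAlgebra k X)}
    {v : FreeAlgebra k X} (hv : v ∈ TSpaceGenF k X S)
    (φ : FreeAlgebra k X →ₐ[k] FreeAlgebra k X) : φ v ∈ TSpaceGenF k X S :=
  Submodule.mem_sInf.mpr fun W hW => hW.1 φ v (Submodule.mem_sInf.mp hv W hW)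

open Polynomial in
lemma coeff_aeval_scaled {k X : Type*} [Field k] [DecidableEq X] (f : MvPolynomial X k)
    (i : X) (t : X → k) (m : ℕ) :
    (MvPolynomial.aeval (fun y => (t y) • (if y = i then (Polynomial.X : Polynomial k) else 1)) f).coeff m
      = MvPolynomial.eval t (∑ d ∈ f.support.filter (fun d => d i = m),
          MvPolynomial.monomial d (MvPolynomial.coeff d f)) := by
  conv_lhs => rw [← MvPolynomial.support_sum_monomial_coeff f]
  rw [map_sum, Polynomial.finset_sum_coeff, map_sum, Finset.sum_filter]
  refine Finset.sum_congr rfl fun d _ => ?_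
  rw [MvPolynomial.aeval_monomial, MvPolynomial.eval_monomial]
  have h1 : (d.prod fun y n => ((t y) • (if y = i then (Polynomial.X : Polynomial k) else 1)) ^ n)
      = Polynomial.C (d.prod fun y n => (t y) ^ n) * Polynomial.X ^ (d i) := by
    have : ∀ y n, ((t y) • (if y = i then (Polynomial.X : Polynomial k) else 1)) ^ n
        = Polynomial.C ((t y) ^ n) * (if y = i then (Polynomial.X : Polynomial k) else 1) ^ n := by
      intro y n
      rw [_root_.smul_pow, Polynomial.smul_eq_C_mul]
    rw [Finsupp.prod_congr (g2 := fun y n => Polynomial.C ((t y) ^ n) * (if y = i then (Polynomial.X : Polynomial k) else 1) ^ n) (fun y _ => this y (d y))]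
    rw [Finsupp.prod, Finset.prod_mul_distrib]
    congr 1
    · rw [Finsupp.prod, map_prod (Polynomial.C : k →+* Polynomial k)]
    · have := Finset.prod_eq_single (s := d.support)
        (f := fun y => (if y = i then (Polynomial.X : Polynomial k) else 1) ^ d y) i
        (fun y _ hy => by simp [hy]) (fun hi => by simp [Finsupp.notMem_support_iff.mp hi])
      rw [this]
      simp
  rw [h1, Polynomial.algebraMap_eq, ← mul_assoc, ← map_mul, Polynomial.coeff_C_mul,
    Polynomial.coeff_X_pow, mul_ite, mul_one, mul_zero]
  simp [eq_comm]

/-- If a T-space contains an element whose abelianization has a monomial with an exponent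
not divisible by the characteristic, then it is everything. -/
lemma eq_top_of_good_monomial {k X : Type*} [Field k] [Infinite k] (x : X)
    (V : Submodule k (FreeAlgebra k X)) (hV : IsTSpaceF k X V) {v : FreeAlgebra k X}
    (hv : v ∈ V) {d₀ : X →₀ ℕ} (hd₀ : d₀ ∈ (piAb k X v).support) {i : X}
    (hi : ((d₀ i : ℕ) : k) ≠ 0) : V = ⊤ := by
  classical
  set f := piAb k X v with hf
  set m := d₀ i with hm
  set G := ∑ d ∈ f.support.filter (fun d => d i = m),
      MvPolynomial.monomial d (MvPolynomial.coeff d f) with hG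
  have hGne : G ≠ 0 := by
    intro h0
    have hcoeff : MvPolynomial.coeff d₀ G = MvPolynomial.coeff d₀ f := by
      rw [hG, MvPolynomial.coeff_sum]
      have : ∀ d ∈ f.support.filter (fun d => d i = m),
          MvPolynomial.coeff d₀ (MvPolynomial.monomial d (MvPolynomial.coeff d f))
          = if d = d₀ then MvPolynomial.coeff d f else 0 := by
        intro d _; rw [MvPolynomial.coeff_monomial]
      have hmemf : d₀ ∈ f.support.filter (fun d => d i = m) :=
        Finset.mem_filter.mpr ⟨hd₀, rfl⟩
      rw [Finset.sum_congr rfl this, Finset.sum_ite_eq' _ d₀ (fun d => MvPolynomial.coeff d f),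
        if_pos hmemf]
    rw [h0] at hcoeff
    exact (MvPolynomial.mem_support_iff.mp hd₀) (by simpa using hcoeff.symm)
  obtain ⟨t, ht⟩ : ∃ t : X → k, MvPolynomial.eval t G ≠ 0 := by
    by_contra h
    push_neg at h
    exact hGne (MvPolynomial.funext fun t => by simpa using h t)
  set q : Polynomial k :=
    MvPolynomial.aeval (fun y => (t y) • (if y = i then (Polynomial.X : Polynomial k) else 1)) f
    with hq
  have hqm : q.coeff m ≠ 0 := by
    rw [hq, coeff_aeval_scaled]
    exact ht
  set σ := FreeAlgebra.lift k (fun y => (t y) • (if y = i then FreeAlgebra.ι k x else 1)) with hσ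
  have hw : σ v = Polynomial.aeval (FreeAlgebra.ι k x) q := by
    have hcomp : σ = (Polynomial.aeval (FreeAlgebra.ι k x)).comp
        ((MvPolynomial.aeval
          (fun y => (t y) • (if y = i then (Polynomial.X : Polynomial k) else 1))).comp
          (piAb k X)) := by
      apply FreeAlgebra.hom_ext
      funext y
      show σ (FreeAlgebra.ι k y) = Polynomial.aeval (FreeAlgebra.ι k x)
        (MvPolynomial.aeval
          (fun y => (t y) • (if y = i then (Polynomial.X : Polynomial k) else 1))
          (piAb k X (FreeAlgebra.ι k y)))
      rw [hσ, FreeAlgebra.lift_ι_apply, piAb, FreeAlgebra.lift_ι_apply, MvPolynomial.aeval_X,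
        map_smul]
      by_cases hy : y = i
      · rw [if_pos hy, if_pos hy, Polynomial.aeval_X]
      · rw [if_neg hy, if_neg hy, map_one]
    rw [hcomp]
    rfl
  have hVw : Polynomial.aeval (FreeAlgebra.ι k x) q ∈ V := hw ▸ hV σ v hv
  set N := q.natDegree + 1 with hN
  have hmem : ∀ n : Fin N, q.coeff (n : ℕ) • (FreeAlgebra.ι k x) ^ (n : ℕ) ∈ V := by
    refine vandermonde_mem V (fun n : Fin N => q.coeff (n : ℕ) • (FreeAlgebra.ι k x) ^ (n : ℕ))
      fun s => ?_
    have hρ := hV (FreeAlgebra.lift k (fun y => s • FreeAlgebra.ι k y)) _ hVw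
    have heq : (FreeAlgebra.lift k (fun y => s • FreeAlgebra.ι k y))
        (Polynomial.aeval (FreeAlgebra.ι k x) q)
        = ∑ n : Fin N, s ^ (n : ℕ) • (q.coeff (n : ℕ) • (FreeAlgebra.ι k x) ^ (n : ℕ)) := by
      rw [← Polynomial.aeval_algHom_apply, FreeAlgebra.lift_ι_apply,
        Polynomial.aeval_eq_sum_range' (lt_add_one _), Fin.sum_univ_eq_sum_range
          (fun n => s ^ n • (q.coeff n • (FreeAlgebra.ι k x) ^ n))]
      refine Finset.sum_congr rfl fun n _ => ?_
      rw [_root_.smul_pow, smul_comm]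
    rwa [heq] at hρ
  have hmN : m < N := by
    by_contra h
    exact hqm (Polynomial.coeff_eq_zero_of_natDegree_lt (by omega))
  have hxm : (FreeAlgebra.ι k x) ^ m ∈ V := by
    have h1 := hmem ⟨m, hmN⟩
    have h2 := V.smul_mem (q.coeff m)⁻¹ h1
    rwa [smul_smul, inv_mul_cancel₀ hqm, one_smul] at h2
  have hmne : m ≠ 0 := by
    intro h; rw [h] at hi; simpa using hi
  have hι : FreeAlgebra.ι k x ∈ V := by
    have hmem2 : ∀ n : Fin (m + 1),
        (FreeAlgebra.ι k x) ^ (n : ℕ) * ((m.choose (n : ℕ) : ℕ) : FreeAlgebra k X) ∈ V := by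
      refine vandermonde_mem V
        (fun n : Fin (m+1) =>
          (FreeAlgebra.ι k x) ^ (n : ℕ) * ((m.choose (n : ℕ) : ℕ) : FreeAlgebra k X))
        fun s => ?_
      have hτ := hV (FreeAlgebra.lift k (fun _ : X => 1 + s • FreeAlgebra.ι k x)) _ hxm
      rw [map_pow, FreeAlgebra.lift_ι_apply] at hτ
      have heq : (1 + s • FreeAlgebra.ι k x) ^ m
          = ∑ n : Fin (m + 1), s ^ (n : ℕ) •
            ((FreeAlgebra.ι k x) ^ (n : ℕ) * ((m.choose (n : ℕ) : ℕ) : FreeAlgebra k X)) := by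
        rw [add_comm, (Commute.one_right (s • FreeAlgebra.ι k x)).add_pow,
          Fin.sum_univ_eq_sum_range
            (fun n => s ^ n • ((FreeAlgebra.ι k x) ^ n * ((m.choose n : ℕ) : FreeAlgebra k X)))]
        refine Finset.sum_congr rfl fun n _ => ?_
        rw [one_pow, mul_one, _root_.smul_pow, smul_mul_assoc]
      rwa [heq] at hτ
    have h1 := hmem2 ⟨1, by omega⟩
    simp only [pow_one, Nat.choose_one_right] at h1
    have hcast : ((m : ℕ) : FreeAlgebra k X) = algebraMap k _ ((m : ℕ) : k) := by
      rw [map_natCast]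
    rw [hcast, ← Algebra.commutes, ← Algebra.smul_def] at h1
    have h2 := V.smul_mem ((m : ℕ) : k)⁻¹ h1
    rwa [smul_smul, inv_mul_cancel₀ hi, one_smul] at h2
  rw [Submodule.eq_top_iff']
  intro a
  have := hV (FreeAlgebra.lift k (fun _ : X => a)) _ hι
  simpa using this

/-- For an infinite field `k`, every proper T-space of `k⟨X⟩` is contained in
`Y = T⁽²⁾ + {c}ˢ`, where `c = ι(x)^p` if `char k = p > 0` and `c = 1` if `char k = 0`. -/
theorem proper_TSpaceF_le_Y (k : Type*) [Field k] [Infinite k]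
    (X : Type*) [Nonempty X] (x : X) :
    ∀ V : Submodule k (FreeAlgebra k X), IsTSpaceF k X V → V ≠ ⊤ →
      V ≤ T2 k X ⊔ TSpaceGenF k X
        {if ringChar k = 0 then 1 else (FreeAlgebra.ι k x) ^ (ringChar k)} := by
  classical
  intro V hV hVne v hv
  set c : FreeAlgebra k X := if ringChar k = 0 then 1 else (FreeAlgebra.ι k x) ^ (ringChar k)
    with hcdef
  by_cases hcase : ∃ d ∈ (piAb k X v).support, ∃ i, ((d i : ℕ) : k) ≠ 0
  · obtain ⟨d₀, hd₀, i, hi⟩ := hcase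
    exact (hVne (eq_top_of_good_monomial x V hV hv hd₀ hi)).elim
  · push_neg at hcase
    -- every monomial of the abelianization has a lift inside the T-space generated by c
    have hlift : ∀ d ∈ (piAb k X v).support, ∃ u : FreeAlgebra k X,
        u ∈ TSpaceGenF k X {c} ∧ piAb k X u = MvPolynomial.monomial d 1 := by
      intro d hd
      by_cases hchar : ringChar k = 0
      · have hcz : CharZero k := by
          have := ringChar.charP k
          rw [hchar] at this
          exact CharP.charP_to_charZero k
        have hd0 : d = 0 := by
          ext i
          have := hcase d hd i
          exact_mod_cast this
        refine ⟨1, ?_, ?_⟩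
        · have : c = 1 := by rw [hcdef, if_pos hchar]
          exact this ▸ self_mem_TSpaceGenF rfl
        · rw [map_one, hd0]
          simp
      · set p := ringChar k with hp
        have hprime : p.Prime := (CharP.char_is_prime_or_zero k p).resolve_right hchar
        have hdvd : ∀ i, p ∣ d i := by
          intro i
          have hcp : CharP k p := ringChar.charP k
          exact (CharP.cast_eq_zero_iff k p (d i)).mp (hcase d hd i)
        set e : X →₀ ℕ := d.mapRange (· / p) (Nat.zero_div p) with he
        have hpe : p • e = d := by
          ext i
          rw [Finsupp.smul_apply, he, Finsupp.mapRange_apply, smul_eq_mul,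
            Nat.mul_div_cancel' (hdvd i)]
        refine ⟨(wordF k e) ^ p, ?_, ?_⟩
        · have hgen : c ∈ TSpaceGenF k X {c} := self_mem_TSpaceGenF rfl
          have happ := apply_mem_TSpaceGenF hgen (FreeAlgebra.lift k (fun _ : X => wordF k e))
          have hcp : (FreeAlgebra.lift k (fun _ : X => wordF k e)) c = (wordF k e) ^ p := by
            rw [hcdef, if_neg hchar, map_pow, FreeAlgebra.lift_ι_apply]
          rwa [hcp] at happ
        · rw [map_pow, piAb_word, MvPolynomial.monomial_pow, one_pow, hpe]
    choose u hu1 hu2 using hlift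
    set w := ∑ d ∈ (piAb k X v).support.attach,
      (MvPolynomial.coeff d.1 (piAb k X v)) • u d.1 d.2 with hw
    have hw1 : w ∈ TSpaceGenF k X {c} :=
      Submodule.sum_mem _ fun d _ => Submodule.smul_mem _ _ (hu1 d.1 d.2)
    have hw2 : piAb k X w = piAb k X v := by
      rw [hw, map_sum]
      have : ∀ d ∈ (piAb k X v).support.attach,
          piAb k X ((MvPolynomial.coeff d.1 (piAb k X v)) • u d.1 d.2)
          = MvPolynomial.monomial d.1 (MvPolynomial.coeff d.1 (piAb k X v)) := by
        intro d _
        rw [map_smul, hu2 d.1 d.2, MvPolynomial.smul_monomial, smul_eq_mul, mul_one]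
      rw [Finset.sum_congr rfl this, Finset.sum_attach _
        (fun d => MvPolynomial.monomial d (MvPolynomial.coeff d (piAb k X v))),
        MvPolynomial.support_sum_monomial_coeff]
    have hvw : v - w ∈ T2 k X := mem_T2_of_piAb_eq_zero (by rw [map_sub, hw2, sub_self])
    have : v = (v - w) + w := by abel
    rw [this]
    exact Submodule.add_mem_sup hvw hw1
end
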